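/- arXiv:1211.3893 — 3 statements merged into one kernel-verified Lean document; each statement's English description precedes it below -/
import Mathlib

section
/- Let φ satisfy Assumption (φ), suppose φ is of type T(p, q, K₁) with 1 < p ≤ q < ∞, let A satisfy Assumption (A), and let P be a 2×2 matrix. Then there is K > 0, depending only on K₁, p and q, such that the shifted N-function φ_{|P|} is of type T(p̄, q̄, K), and both (φ_{|P|})* and (φ*)_{|A(P)|} are of type T(q̄', p̄', K). -/
open MeasureTheory Metric Set Filter
open scoped ENNReal RealInnerProductSpace Topology

noncomputable section

/-- `Eu n` is Euclidean space `ℝⁿ`. -/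
abbrev Eu (n : ℕ) := EuclideanSpace ℝ (Fin n)

/-- `Mat m n` is the space of real `m × n` matrices. -/
abbrev Mat (m n : ℕ) := Matrix (Fin m) (Fin n) ℝ

/-- The Frobenius inner product of matrices. -/
def frobInner {m n : ℕ} (P Q : Mat m n) : ℝ := ∑ i, ∑ j, P i j * Q i j

/-- The Frobenius norm of a matrix. -/
def frobNorm {m n : ℕ} (P : Mat m n) : ℝ := Real.sqrt (frobInner P P)

/-- The symmetric part of a square matrix. -/
def symPart {n : ℕ} (M : Mat n n) : Mat n n := (2⁻¹ : ℝ) • (M + M.transpose)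

/-- The antisymmetric part of a square matrix. -/
def skewPart {n : ℕ} (M : Mat n n) : Mat n n := (2⁻¹ : ℝ) • (M - M.transpose)

/-- The `j`-th standard basis vector of `ℝⁿ`. -/
def euBasis (n : ℕ) (j : Fin n) : Eu n := EuclideanSpace.single j 1

/-- Smooth compactly supported test functions with support inside `Ω`. -/
def IsTest {n : ℕ} {F : Type} [NormedAddCommGroup F] [NormedSpace ℝ F]
    (Ω : Set (Eu n)) (ξ : Eu n → F) : Prop :=
  ContDiff ℝ (⊤ : ℕ∞) ξ ∧ HasCompactSupport ξ ∧ tsupport ξ ⊆ Ω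

/-- The gradient matrix `(∇ξ)_{ij} = ∂_j ξ_i` of a map `ξ : ℝⁿ → ℝᵐ`. -/
def gradOf {n m : ℕ} (ξ : Eu n → Eu m) (x : Eu n) : Mat m n :=
  Matrix.of fun i j => fderiv ℝ (fun y => ξ y i) x (euBasis n j)

/-- The divergence of a vector field `ξ : ℝⁿ → ℝⁿ`. -/
def divOf {n : ℕ} (ξ : Eu n → Eu n) (x : Eu n) : ℝ := Matrix.trace (gradOf ξ x)

/-- `v` is locally integrable on `Ω` with weak gradient `dv` (an `m × n` matrix field). -/
def HasWeakGradOn {n m : ℕ} (v : Eu n → Eu m) (dv : Eu n → Mat m n) (Ω : Set (Eu n)) : Prop :=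
  (∀ i, LocallyIntegrableOn (fun x => v x i) Ω) ∧
  (∀ i j, LocallyIntegrableOn (fun x => dv x i j) Ω) ∧
  ∀ ξ : Eu n → ℝ, IsTest Ω ξ → ∀ (i : Fin m) (j : Fin n),
    ∫ x in Ω, v x i * fderiv ℝ ξ x (euBasis n j) = - ∫ x in Ω, dv x i j * ξ x

/-- A scalar function `f` has weak partial derivatives `df` on `Ω`. -/
def HasWeakPartialsOn {n : ℕ} (f : Eu n → ℝ) (df : Eu n → Fin n → ℝ) (Ω : Set (Eu n)) : Prop :=
  LocallyIntegrableOn f Ω ∧ (∀ j, LocallyIntegrableOn (fun x => df x j) Ω) ∧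
  ∀ ξ : Eu n → ℝ, IsTest Ω ξ → ∀ j : Fin n,
    ∫ x in Ω, f x * fderiv ℝ ξ x (euBasis n j) = - ∫ x in Ω, df x j * ξ x

/-- The mean `⟨f⟩_B` of a matrix-valued function over a set, computed entrywise. -/
def avgM {k m n : ℕ} (f : Eu k → Mat m n) (B : Set (Eu k)) : Mat m n :=
  Matrix.of fun i j => ⨍ x in B, f x i j

/-- Mean oscillation `M^♯_B f` of a scalar function over the ball of center `z`, radius `R`. -/
def MsharpS {n : ℕ} (f : Eu n → ℝ) (z : Eu n) (R : ℝ) : ℝ :=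
  ⨍ x in ball z R, |f x - ⨍ y in ball z R, f y|

/-- Mean oscillation `M^♯_B f` of a matrix-valued function over the ball of center `z`,
radius `R`. -/
def MsharpM {k m n : ℕ} (f : Eu k → Mat m n) (z : Eu k) (R : ℝ) : ℝ :=
  ⨍ x in ball z R, frobNorm (f x - avgM f (ball z R))

/-- The weighted `BMO_ω` seminorm of a scalar function on `U` (valued in `ℝ≥0∞`);
`ω(r) = r^β` gives the Campanato seminorm `𝓛^{1,2+β}` and `ω ≡ 1` the `BMO` seminorm. -/
def BMOS {n : ℕ} (ω : ℝ → ℝ) (f : Eu n → ℝ) (U : Set (Eu n)) : ℝ≥0∞ :=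
  ⨆ (z : Eu n) (R : ℝ) (_ : 0 < R) (_ : ball z R ⊆ U),
    ENNReal.ofReal ((ω R)⁻¹ * MsharpS f z R)

/-- The weighted `BMO_ω` seminorm of a matrix-valued function on `U`. -/
def BMOM {k m n : ℕ} (ω : ℝ → ℝ) (f : Eu k → Mat m n) (U : Set (Eu k)) : ℝ≥0∞ :=
  ⨆ (z : Eu k) (R : ℝ) (_ : 0 < R) (_ : ball z R ⊆ U),
    ENNReal.ofReal ((ω R)⁻¹ * MsharpM f z R)

/-- Vanishing mean oscillation for scalar functions:
`sup { M^♯_Q f : balls Q ⊆ U, |Q| < ε } → 0` as `ε → 0⁺`. -/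
def IsVMOS {n : ℕ} (f : Eu n → ℝ) (U : Set (Eu n)) : Prop :=
  ∀ δ : ℝ, 0 < δ → ∃ ε : ℝ, 0 < ε ∧ ∀ (z : Eu n) (R : ℝ), 0 < R → ball z R ⊆ U →
    volume (ball z R) < ENNReal.ofReal ε → MsharpS f z R ≤ δ

/-- Vanishing mean oscillation for matrix-valued functions. -/
def IsVMOM {k m n : ℕ} (f : Eu k → Mat m n) (U : Set (Eu k)) : Prop :=
  ∀ δ : ℝ, 0 < δ → ∃ ε : ℝ, 0 < ε ∧ ∀ (z : Eu k) (R : ℝ), 0 < R → ball z R ⊆ U →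
    volume (ball z R) < ENNReal.ofReal ε → MsharpM f z R ≤ δ

/-- `φ` is an N-function with (right-)derivative `φ'`. -/
structure IsNFunction (φ φ' : ℝ → ℝ) : Prop where
  zero : φ 0 = 0
  convex : ConvexOn ℝ (Ici 0) φ
  hasDeriv : ∀ t ∈ Ici (0 : ℝ), HasDerivWithinAt φ (φ' t) (Ici 0) t
  rightCont : ∀ t ∈ Ici (0 : ℝ), ContinuousWithinAt φ' (Ici t) t
  mono : MonotoneOn φ' (Ici 0)
  derivZero : φ' 0 = 0
  derivPos : ∀ t : ℝ, 0 < t → 0 < φ' t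

/-- The complementary (conjugate) N-function `φ*(u) = sup_{t ≥ 0} (u t − φ(t))`. -/
def conjFn (φ : ℝ → ℝ) (u : ℝ) : ℝ := sSup ((fun t => u * t - φ t) '' Ici 0)

/-- The shifted N-function `φ_a(t) = ∫₀ᵗ φ'(a+s)·s/(a+s) ds`, described by the
derivative `φ'` of `φ`. -/
def shiftFn (φ' : ℝ → ℝ) (a t : ℝ) : ℝ := ∫ s in (0 : ℝ)..t, φ' (a + s) * s / (a + s)

/-- The derivative `(φ_a)'(t) = φ'(a+t)·t/(a+t)` of the shifted N-function. -/
def shiftDeriv (φ' : ℝ → ℝ) (a t : ℝ) : ℝ := φ' (a + t) * t / (a + t)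

/-- The right-continuous inverse of a non-decreasing function, used as the derivative
of the complementary function: `(φ*)' = (φ')⁻¹`. -/
def rcInv (g : ℝ → ℝ) (t : ℝ) : ℝ := sSup {s : ℝ | 0 ≤ s ∧ g s ≤ t}

/-- The function `V(Q) = (φ'(|Q|)|Q|)^{1/2} Q/|Q|`, `V(0) = 0`. -/
def Vfn (φ' : ℝ → ℝ) (Q : Mat 2 2) : Mat 2 2 :=
  if Q = 0 then 0 else (Real.sqrt (φ' (frobNorm Q) * frobNorm Q) / frobNorm Q) • Q

/-- `ψ` is of type `T(p, q, K)`: `ψ(st) ≤ K max{s^p, s^q} ψ(t)` for all `s, t ≥ 0`. -/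
def TypeT (ψ : ℝ → ℝ) (p q K : ℝ) : Prop :=
  ∀ s t : ℝ, 0 ≤ s → 0 ≤ t → ψ (s * t) ≤ K * max (s ^ p) (s ^ q) * ψ t

/-- `p̄ = min{p, 2}`. -/
def pbar (p : ℝ) : ℝ := min p 2

/-- `q̄ = max{q, 2}`. -/
def qbar (q : ℝ) : ℝ := max q 2

/-- The Hölder-conjugate exponent `p' = p/(p−1)`. -/
def conjExp (p : ℝ) : ℝ := p / (p - 1)

/-- Assumption (φ), with the characteristics `c₀, c₁, cm` of `φ` made explicit:
`φ` is an N-function, `C²` on `(0,∞)` and `C¹` on `[0,∞)`, `φ''` is almost monotone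
(with constant `cm`) and `c₀ t φ''(t) ≤ φ'(t) ≤ c₁ t φ''(t)` for `t > 0`. -/
structure AssumptionPhi (φ φ' φ'' : ℝ → ℝ) (c₀ c₁ cm : ℝ) : Prop where
  nfun : IsNFunction φ φ'
  contDiffTwo : ContDiffOn ℝ 2 φ (Ioi 0)
  contOne : ContinuousOn φ' (Ici 0)
  derivTwo : ∀ t : ℝ, 0 < t → HasDerivAt φ' (φ'' t) t
  cm_pos : 0 < cm
  almostMono : (∀ s t : ℝ, 0 < s → s ≤ t → φ'' s ≤ cm * φ'' t) ∨
               (∀ s t : ℝ, 0 < s → s ≤ t → cm * φ'' t ≤ φ'' s)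
  c0_pos : 0 < c₀
  c1_pos : 0 < c₁
  lowerBound : ∀ t : ℝ, 0 < t → c₀ * (t * φ'' t) ≤ φ' t
  upperBound : ∀ t : ℝ, 0 < t → φ' t ≤ c₁ * (t * φ'' t)

/-- Assumption (A), with the constants `cA, CA` made explicit: `A` is continuous,
locally Lipschitz away from `0`, `A(0) = 0`, maps symmetric matrices to symmetric
matrices, and has non-standard `φ`-growth described by `φ''`. -/
structure AssumptionA (φ'' : ℝ → ℝ) (A : Mat 2 2 → Mat 2 2) (cA CA : ℝ) : Prop where
  cont : Continuous A
  locLip : ∀ P : Mat 2 2, P ≠ 0 → ∃ K ε : ℝ, 0 < ε ∧ ∀ Q₁ Q₂ : Mat 2 2,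
    frobNorm (Q₁ - P) < ε → frobNorm (Q₂ - P) < ε →
    frobNorm (A Q₁ - A Q₂) ≤ K * frobNorm (Q₁ - Q₂)
  zero : A 0 = 0
  symm : ∀ D : Mat 2 2, D.IsSymm → (A D).IsSymm
  cA_pos : 0 < cA
  CA_pos : 0 < CA
  coercive : ∀ P Q : Mat 2 2, P.IsSymm → Q.IsSymm → P ≠ 0 →
    cA * φ'' (frobNorm P + frobNorm Q) * frobNorm (P - Q) ^ 2 ≤
      frobInner (A P - A Q) (P - Q)
  growth : ∀ P Q : Mat 2 2, P.IsSymm → Q.IsSymm → P ≠ 0 →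
    frobNorm (A P - A Q) ≤ CA * φ'' (frobNorm P + frobNorm Q) * frobNorm (P - Q)

/-- A local weak solution `(u, π)` (with weak gradient `du` of `u`) of the generalized
Stokes system `−div A(Du) + ∇π = −div G`, `div u = 0` on `Ω`. -/
structure StokesSolution (φ φstar : ℝ → ℝ) (A : Mat 2 2 → Mat 2 2) (Ω : Set (Eu 2))
    (u : Eu 2 → Eu 2) (du : Eu 2 → Mat 2 2) (π : Eu 2 → ℝ) (G : Eu 2 → Mat 2 2) : Prop where
  grad : HasWeakGradOn u du Ω
  orliczGrad : ∀ K : Set (Eu 2), K ⊆ Ω → IsCompact K →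
    IntegrableOn (fun x => φ (frobNorm (du x))) K
  divFree : ∀ᵐ x ∂(volume.restrict Ω), Matrix.trace (du x) = 0
  piLocInt : LocallyIntegrableOn π Ω
  orliczPi : ∀ K : Set (Eu 2), K ⊆ Ω → IsCompact K →
    IntegrableOn (fun x => φstar |π x|) K
  GLocInt : ∀ i j, LocallyIntegrableOn (fun x => G x i j) Ω
  GSymm : ∀ x, (G x).IsSymm
  weakForm : ∀ ξ : Eu 2 → Eu 2, IsTest Ω ξ →
    (∫ x in Ω, frobInner (A (symPart (du x))) (symPart (gradOf ξ x)))
      - ∫ x in Ω, π x * divOf ξ x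
    = ∫ x in Ω, frobInner (G x) (symPart (gradOf ξ x))

/-- A local weak solution `h` (with weak gradient `dh`) of the homogeneous generalized
Stokes system `−div A(Dh) + ∇ρ = 0`, `div h = 0` on `U` (tested with divergence-free
test functions, which eliminates the pressure). -/
structure HomogStokes (φ : ℝ → ℝ) (A : Mat 2 2 → Mat 2 2) (U : Set (Eu 2))
    (h : Eu 2 → Eu 2) (dh : Eu 2 → Mat 2 2) : Prop where
  grad : HasWeakGradOn h dh U
  orliczGrad : ∀ K : Set (Eu 2), K ⊆ U → IsCompact K →
    IntegrableOn (fun x => φ (frobNorm (dh x))) K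
  divFree : ∀ᵐ x ∂(volume.restrict U), Matrix.trace (dh x) = 0
  weakForm : ∀ ξ : Eu 2 → Eu 2, IsTest U ξ → (∀ x, divOf ξ x = 0) →
    ∫ x in U, frobInner (A (symPart (dh x))) (symPart (gradOf ξ x)) = 0

section Lemma23Aux

/-- Two-sided power bounds for a function under scaling by `lam ≥ 1`. -/
def Bdds (ψ : ℝ → ℝ) (a b B : ℝ) : Prop :=
  ∀ lam t : ℝ, 1 ≤ lam → 0 ≤ t →
    B⁻¹ * lam ^ a * ψ t ≤ ψ (lam * t) ∧ ψ (lam * t) ≤ B * lam ^ b * ψ t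

lemma typeT_mono {ψ : ℝ → ℝ} {p q K K' : ℝ} (h : TypeT ψ p q K)
    (hψ : ∀ t, 0 ≤ t → 0 ≤ ψ t) (hK : K ≤ K') : TypeT ψ p q K' := by
  intro s t hs ht
  refine (h s t hs ht).trans ?_
  have h1 : (0:ℝ) ≤ max (s ^ p) (s ^ q) := le_max_of_le_left (Real.rpow_nonneg hs p)
  exact mul_le_mul_of_nonneg_right (mul_le_mul_of_nonneg_right hK h1) (hψ t ht)

lemma typeT_of_bdds {ψ : ℝ → ℝ} {a b B : ℝ} (ha : 0 < a) (hab : a ≤ b) (hB : 1 ≤ B)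
    (hψ0 : ψ 0 = 0) (hψ : ∀ t, 0 ≤ t → 0 ≤ ψ t) (h : Bdds ψ a b B) : TypeT ψ a b B := by
  have hB0 : (0:ℝ) < B := lt_of_lt_of_le one_pos hB
  intro s t hs ht
  rcases eq_or_lt_of_le hs with rfl | hs0
  · rw [zero_mul, hψ0, Real.zero_rpow ha.ne', Real.zero_rpow (lt_of_lt_of_le ha hab).ne']
    simp
  rcases le_or_gt 1 s with h1s | h1s
  · have := (h s t h1s ht).2
    refine this.trans ?_
    exact mul_le_mul_of_nonneg_right
      (mul_le_mul_of_nonneg_left (le_max_right _ _) hB0.le) (hψ t ht)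
  · -- 0 < s < 1
    have hlam : (1:ℝ) ≤ s⁻¹ := one_le_inv_iff₀.mpr ⟨hs0, h1s.le⟩
    have hst : 0 ≤ s * t := mul_nonneg hs ht
    have key := (h s⁻¹ (s * t) hlam hst).1
    rw [← mul_assoc, inv_mul_cancel₀ hs0.ne', one_mul] at key
    have hinv : s⁻¹ ^ a = (s ^ a)⁻¹ := Real.inv_rpow hs a
    rw [hinv] at key
    have hsa : (0:ℝ) < s ^ a := Real.rpow_pos_of_pos hs0 a
    have h2 : ψ (s * t) ≤ B * s ^ a * ψ t := by
      have h3 : B⁻¹ * (s ^ a)⁻¹ * ψ (s * t) ≤ ψ t := key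
      calc ψ (s * t) = (B * s ^ a) * (B⁻¹ * (s ^ a)⁻¹ * ψ (s * t)) := by
            field_simp
        _ ≤ (B * s ^ a) * ψ t := by
            exact mul_le_mul_of_nonneg_left h3 (by positivity)
        _ = B * s ^ a * ψ t := by ring
    refine h2.trans ?_
    exact mul_le_mul_of_nonneg_right
      (mul_le_mul_of_nonneg_left (le_max_left _ _) hB0.le) (hψ t ht)

lemma one_lt_conjExp {x : ℝ} (h : 1 < x) : 1 < conjExp x := by
  unfold conjExp
  rw [lt_div_iff₀ (by linarith)]
  linarith

lemma conjExp_sub_one {x : ℝ} (h : 1 < x) : conjExp x - 1 = (x - 1)⁻¹ := by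
  have hx : x - 1 ≠ 0 := by linarith
  unfold conjExp
  field_simp
  ring

lemma conjExp_sub_one_mul {x : ℝ} (h : 1 < x) : (conjExp x - 1) * (x - 1) = 1 := by
  rw [conjExp_sub_one h]
  exact inv_mul_cancel₀ (sub_ne_zero.mpr h.ne')

lemma conjExp_sub_one_mul' {x : ℝ} (h : 1 < x) : (conjExp x - 1) * x = conjExp x := by
  rw [conjExp_sub_one h]
  unfold conjExp
  field_simp

lemma conjExp_anti {x y : ℝ} (hx : 1 < x) (hxy : x ≤ y) : conjExp y ≤ conjExp x := by
  unfold conjExp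
  rw [div_le_div_iff₀ (by linarith) (by linarith)]
  nlinarith

lemma conjExp_two : conjExp 2 = 2 := by norm_num [conjExp]

/-- The key substitution inequality for the conjugate function. -/
lemma conj_sub_ineq {ψ : ℝ → ℝ} {a b B : ℝ} (ha : 1 < a) (hab : a ≤ b) (hB : 1 ≤ B)
    (hψ : ∀ t, 0 ≤ t → 0 ≤ ψ t) (h : Bdds ψ a b B) {s r E : ℝ} (hs : 0 < s) (hr : 0 ≤ r)
    (hE : (1 ≤ s ∧ E = conjExp a) ∨ (s ≤ 1 ∧ E = conjExp b)) :
    B ^ (conjExp a - 1) * s ^ E * ψ r ≤ ψ (B ^ (conjExp a - 1) * s ^ (E - 1) * r) := by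
  have hb : 1 < b := lt_of_lt_of_le ha hab
  have hB0 : (0:ℝ) < B := lt_of_lt_of_le one_pos hB
  set K : ℝ := B ^ (conjExp a - 1) with hKdef
  have hK1 : 1 ≤ K := Real.one_le_rpow hB (by
    have := one_lt_conjExp ha; linarith)
  have hK0 : (0:ℝ) < K := lt_of_lt_of_le one_pos hK1
  have hKa : K ^ (a - 1) = B := by
    rw [hKdef, ← Real.rpow_mul hB0.le, conjExp_sub_one_mul ha, Real.rpow_one]
  have hE1 : 1 < E := by
    rcases hE with ⟨_, rfl⟩ | ⟨_, rfl⟩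
    · exact one_lt_conjExp ha
    · exact one_lt_conjExp hb
  have hKsplit : K ^ a = K ^ (a - 1) * K := by
    nth_rewrite 1 [show a = (a - 1) + 1 by ring]
    rw [Real.rpow_add hK0, Real.rpow_one]
  have hKBK : K ^ a = B * K := by rw [hKsplit, hKa]
  set g : ℝ := K * s ^ (E - 1) with hgdef
  have hg0 : 0 < g := by positivity
  rcases le_or_gt 1 g with hg1 | hg1
  · -- use the lower bound of Bdds at (g, r)
    have key := (h g r hg1 hr).1
    have hga : g ^ a = K ^ a * s ^ ((E - 1) * a) := by
      rw [hgdef, Real.mul_rpow hK0.le (Real.rpow_nonneg hs.le _), ← Real.rpow_mul hs.le]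
    have hKaa : B⁻¹ * K ^ a = K := by
      rw [hKBK, ← mul_assoc, inv_mul_cancel₀ hB0.ne', one_mul]
    have hsE : s ^ E ≤ s ^ ((E - 1) * a) := by
      rcases hE with ⟨hs1, rfl⟩ | ⟨hs1, rfl⟩
      · rw [conjExp_sub_one_mul' ha]
      · apply Real.rpow_le_rpow_of_exponent_ge hs hs1
        nlinarith [conjExp_sub_one_mul' hb, one_lt_conjExp hb]
    calc K * s ^ E * ψ r ≤ K * s ^ ((E - 1) * a) * ψ r := by
          exact mul_le_mul_of_nonneg_right (mul_le_mul_of_nonneg_left hsE hK0.le) (hψ r hr)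
      _ = B⁻¹ * g ^ a * ψ r := by
          rw [hga]
          linear_combination (-(s ^ ((E - 1) * a) * ψ r)) * hKaa
      _ ≤ ψ (g * r) := key
  · -- g < 1 : use the upper bound of Bdds at (g⁻¹, g*r)
    have hginv : (1:ℝ) ≤ g⁻¹ := one_le_inv_iff₀.mpr ⟨hg0, hg1.le⟩
    have key := (h g⁻¹ (g * r) hginv (by positivity)).2
    rw [← mul_assoc, inv_mul_cancel₀ hg0.ne', one_mul] at key
    -- key : ψ r ≤ B * g⁻¹ ^ b * ψ (g * r)
    have hinvb : g⁻¹ ^ b = (g ^ b)⁻¹ := Real.inv_rpow hg0.le b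
    rw [hinvb] at key
    have hgb0 : (0:ℝ) < g ^ b := Real.rpow_pos_of_pos hg0 b
    have key2 : B⁻¹ * g ^ b * ψ r ≤ ψ (g * r) := by
      have := mul_le_mul_of_nonneg_left key (by positivity : (0:ℝ) ≤ B⁻¹ * g ^ b)
      calc B⁻¹ * g ^ b * ψ r ≤ B⁻¹ * g ^ b * (B * (g ^ b)⁻¹ * ψ (g * r)) := this
        _ = ψ (g * r) := by field_simp
    refine le_trans ?_ key2
    have hgb : g ^ b = K ^ b * s ^ ((E - 1) * b) := by
      rw [hgdef, Real.mul_rpow hK0.le (Real.rpow_nonneg hs.le _), ← Real.rpow_mul hs.le]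
    have hKb : K ≤ B⁻¹ * K ^ b := by
      have h1 : K ^ a ≤ K ^ b := Real.rpow_le_rpow_of_exponent_le hK1 hab
      calc K = B⁻¹ * (B * K) := by rw [← mul_assoc, inv_mul_cancel₀ hB0.ne', one_mul]
        _ = B⁻¹ * K ^ a := by rw [hKBK]
        _ ≤ B⁻¹ * K ^ b := mul_le_mul_of_nonneg_left h1 (by positivity)
    have hsE : s ^ E ≤ s ^ ((E - 1) * b) := by
      rcases hE with ⟨hs1, rfl⟩ | ⟨hs1, rfl⟩
      · apply Real.rpow_le_rpow_of_exponent_le hs1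
        nlinarith [conjExp_sub_one_mul' ha, one_lt_conjExp ha]
      · rw [conjExp_sub_one_mul' hb]
    rw [hgb, ← mul_assoc]
    have hs1 : (0:ℝ) ≤ s ^ E := Real.rpow_nonneg hs.le _
    have := mul_le_mul hKb hsE hs1 (by positivity)
    exact mul_le_mul_of_nonneg_right this (hψ r hr)

lemma conj_bddAbove {ψ : ℝ → ℝ} {a b B : ℝ} (ha : 1 < a) (hab : a ≤ b) (hB : 1 ≤ B)
    (hψ : ∀ t, 0 ≤ t → 0 ≤ ψ t) (hψ1 : 0 < ψ 1) (h : Bdds ψ a b B) {u : ℝ} (hu : 0 ≤ u) :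
    BddAbove ((fun t => u * t - ψ t) '' Ici 0) := by
  have hB0 : (0:ℝ) < B := lt_of_lt_of_le one_pos hB
  set m : ℝ := B⁻¹ * ψ 1 with hm
  have hm0 : 0 < m := by positivity
  have hgrow : ∀ t : ℝ, 1 ≤ t → m * t ^ a ≤ ψ t := by
    intro t ht
    have := (h t 1 ht zero_le_one).1
    rw [mul_one] at this
    calc m * t ^ a = B⁻¹ * t ^ a * ψ 1 := by rw [hm]; ring
      _ ≤ ψ t := this
  set T : ℝ := max 1 ((u / m) ^ (a - 1)⁻¹) with hT
  have hT1 : (1:ℝ) ≤ T := le_max_left _ _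
  have hT0 : (0:ℝ) < T := lt_of_lt_of_le one_pos hT1
  refine ⟨u * T, ?_⟩
  rintro x ⟨t, ht, rfl⟩
  simp only
  have ht0 : (0:ℝ) ≤ t := ht
  rcases le_or_gt t T with htT | htT
  · have h1 : u * t ≤ u * T := mul_le_mul_of_nonneg_left htT hu
    have h2 : 0 ≤ ψ t := hψ t ht0
    linarith
  · -- t > T ≥ 1
    have ht1 : (1:ℝ) ≤ t := le_trans hT1 htT.le
    have ht0' : (0:ℝ) < t := lt_of_lt_of_le one_pos ht1
    have hum : u ≤ m * t ^ (a - 1) := by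
      have e1 : (u / m) ^ (a - 1)⁻¹ ≤ T := le_max_right _ _
      have ha1 : (0:ℝ) < a - 1 := by linarith
      have e2 : ((u / m) ^ (a - 1)⁻¹) ^ (a - 1) ≤ T ^ (a - 1) :=
        Real.rpow_le_rpow (Real.rpow_nonneg (by positivity) _) e1 ha1.le
      rw [← Real.rpow_mul (by positivity), inv_mul_cancel₀ ha1.ne', Real.rpow_one] at e2
      have e3 : T ^ (a - 1) ≤ t ^ (a - 1) := Real.rpow_le_rpow hT0.le htT.le ha1.le
      have e4 : u / m ≤ t ^ (a - 1) := le_trans e2 e3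
      calc u = m * (u / m) := by field_simp
        _ ≤ m * t ^ (a - 1) := mul_le_mul_of_nonneg_left e4 hm0.le
    have hsplit : t ^ a = t ^ (a - 1) * t := by
      nth_rewrite 1 [show a = (a - 1) + 1 by ring]
      rw [Real.rpow_add ht0', Real.rpow_one]
    have h5 : u * t ≤ m * t ^ a := by
      rw [hsplit, ← mul_assoc]
      exact mul_le_mul_of_nonneg_right hum ht0'.le
    have h6 : m * t ^ a ≤ ψ t := hgrow t ht1
    nlinarith [mul_nonneg hu hT0.le]

lemma conj_nonneg {ψ : ℝ → ℝ} {a b B : ℝ} (ha : 1 < a) (hab : a ≤ b) (hB : 1 ≤ B)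
    (hψ0 : ψ 0 = 0) (hψ : ∀ t, 0 ≤ t → 0 ≤ ψ t) (hψ1 : 0 < ψ 1) (h : Bdds ψ a b B)
    {u : ℝ} (hu : 0 ≤ u) : 0 ≤ conjFn ψ u := by
  have hmem : (0:ℝ) ∈ (fun t => u * t - ψ t) '' Ici 0 :=
    ⟨0, self_mem_Ici, by simp [hψ0]⟩
  exact le_csSup (conj_bddAbove ha hab hB hψ hψ1 h hu) hmem

lemma conj_typeT {ψ : ℝ → ℝ} {a b B : ℝ} (ha : 1 < a) (hab : a ≤ b) (hB : 1 ≤ B)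
    (hψ0 : ψ 0 = 0) (hψ : ∀ t, 0 ≤ t → 0 ≤ ψ t) (hψ1 : 0 < ψ 1) (h : Bdds ψ a b B) :
    TypeT (conjFn ψ) (conjExp b) (conjExp a) (B ^ (conjExp a - 1)) := by
  have hb : 1 < b := lt_of_lt_of_le ha hab
  have hB0 : (0:ℝ) < B := lt_of_lt_of_le one_pos hB
  set K : ℝ := B ^ (conjExp a - 1) with hKdef
  have hK1 : 1 ≤ K := Real.one_le_rpow hB (by have := one_lt_conjExp ha; linarith)
  have hK0 : (0:ℝ) < K := lt_of_lt_of_le one_pos hK1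
  intro s u hs hu
  rcases eq_or_lt_of_le hs with rfl | hs0
  · rw [zero_mul]
    have e0 : conjFn ψ 0 = 0 := by
      refine le_antisymm ?_ (conj_nonneg ha hab hB hψ0 hψ hψ1 h le_rfl)
      refine Real.sSup_le ?_ le_rfl
      rintro x ⟨t, ht, rfl⟩
      simp only [zero_mul, zero_sub, neg_nonpos]
      exact hψ t ht
    rw [e0, Real.zero_rpow (by have := one_lt_conjExp hb; positivity),
      Real.zero_rpow (by have := one_lt_conjExp ha; positivity)]
    simp
  · -- s > 0
    set E : ℝ := if 1 ≤ s then conjExp a else conjExp b with hEdef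
    have hEcase : (1 ≤ s ∧ E = conjExp a) ∨ (s ≤ 1 ∧ E = conjExp b) := by
      rcases le_or_gt 1 s with h1 | h1
      · exact Or.inl ⟨h1, by rw [hEdef, if_pos h1]⟩
      · exact Or.inr ⟨h1.le, by rw [hEdef, if_neg (not_le.mpr h1)]⟩
    have hmaxE : max (s ^ conjExp b) (s ^ conjExp a) = s ^ E := by
      rcases hEcase with ⟨h1, hE⟩ | ⟨h1, hE⟩
      · rw [hE]
        exact max_eq_right (Real.rpow_le_rpow_of_exponent_le h1 (conjExp_anti ha hab))
      · rw [hE]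
        exact max_eq_left (Real.rpow_le_rpow_of_exponent_ge hs0 h1 (conjExp_anti ha hab))
    rw [hmaxE]
    -- goal : conjFn ψ (s * u) ≤ K * s ^ E * conjFn ψ u
    have hconju : 0 ≤ conjFn ψ u := conj_nonneg ha hab hB hψ0 hψ hψ1 h hu
    have hg0 : (0:ℝ) < K * s ^ (E - 1) := by positivity
    refine Real.sSup_le ?_ (by positivity)
    rintro x ⟨t, ht, rfl⟩
    simp only
    set r : ℝ := t / (K * s ^ (E - 1)) with hr
    have hr0 : 0 ≤ r := div_nonneg ht hg0.le
    have htr : t = K * s ^ (E - 1) * r := by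
      rw [hr]; field_simp
    have key := conj_sub_ineq ha hab hB hψ h hs0 hr0 hEcase
    have hsE : s * (K * s ^ (E - 1)) = K * s ^ E := by
      nth_rewrite 2 [show E = (E - 1) + 1 by ring]
      rw [Real.rpow_add hs0, Real.rpow_one]
      ring
    have step1 : s * u * t - ψ t ≤ K * s ^ E * (u * r - ψ r) := by
      rw [htr]
      have e1 : s * u * (K * s ^ (E - 1) * r) = K * s ^ E * (u * r) := by
        rw [← hsE]; ring
      rw [e1]
      have := key
      nlinarith [key]
    refine step1.trans ?_
    have hmemr : u * r - ψ r ≤ conjFn ψ u :=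
      le_csSup (conj_bddAbove ha hab hB hψ hψ1 h hu) ⟨r, hr0, rfl⟩
    exact mul_le_mul_of_nonneg_left hmemr (by positivity)

section Shift

variable {g : ℝ → ℝ} {a₀ : ℝ}

/-- The integrand of the shifted N-function. -/
def shiftIntegrand (g : ℝ → ℝ) (a₀ : ℝ) (s : ℝ) : ℝ := g (a₀ + s) * s / (a₀ + s)

lemma shiftIntegrand_nonneg (hgm : MonotoneOn g (Ici 0)) (hg0 : g 0 = 0) (ha₀ : 0 ≤ a₀)
    {s : ℝ} (hs : 0 ≤ s) : 0 ≤ shiftIntegrand g a₀ s := by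
  have h1 : 0 ≤ g (a₀ + s) := by
    rw [← hg0]
    exact hgm self_mem_Ici (by positivity : (0:ℝ) ≤ a₀ + s) (by positivity)
  exact div_nonneg (mul_nonneg h1 hs) (by positivity)

lemma shiftIntegrand_mono (hgm : MonotoneOn g (Ici 0)) (hg0 : g 0 = 0) (ha₀ : 0 ≤ a₀) :
    MonotoneOn (shiftIntegrand g a₀) (Ici 0) := by
  intro x hx y hy hxy
  simp only [mem_Ici] at hx hy
  rcases eq_or_lt_of_le hx with rfl | hx0
  · rw [shiftIntegrand, mul_zero, zero_div]
    exact shiftIntegrand_nonneg hgm hg0 ha₀ hy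
  · have hax : (0:ℝ) < a₀ + x := by positivity
    have hay : (0:ℝ) < a₀ + y := by linarith
    rw [shiftIntegrand, shiftIntegrand, div_le_div_iff₀ hax hay]
    have h1 : g (a₀ + x) ≤ g (a₀ + y) :=
      hgm (mem_Ici.mpr hax.le) (mem_Ici.mpr hay.le) (by linarith)
    have h2 : 0 ≤ g (a₀ + x) := by
      rw [← hg0]; exact hgm self_mem_Ici (mem_Ici.mpr hax.le) hax.le
    have h3 : x * (a₀ + y) ≤ y * (a₀ + x) := by nlinarith
    calc g (a₀ + x) * x * (a₀ + y) = g (a₀ + x) * (x * (a₀ + y)) := by ring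
      _ ≤ g (a₀ + y) * (x * (a₀ + y)) :=
          mul_le_mul_of_nonneg_right h1 (by positivity)
      _ ≤ g (a₀ + y) * (y * (a₀ + x)) :=
          mul_le_mul_of_nonneg_left h3 (le_trans h2 h1)
      _ = g (a₀ + y) * y * (a₀ + x) := by ring

lemma shiftIntegrand_intable (hgm : MonotoneOn g (Ici 0)) (hg0 : g 0 = 0) (ha₀ : 0 ≤ a₀)
    {t : ℝ} (ht : 0 ≤ t) : IntervalIntegrable (shiftIntegrand g a₀) volume 0 t := by
  apply MonotoneOn.intervalIntegrable
  apply (shiftIntegrand_mono hgm hg0 ha₀).mono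
  rw [uIcc_of_le ht]
  exact Icc_subset_Ici_self

lemma shiftFn_eq (t : ℝ) : shiftFn g a₀ t = ∫ s in (0:ℝ)..t, shiftIntegrand g a₀ s := rfl

lemma shiftFn_zero : shiftFn g a₀ 0 = 0 := intervalIntegral.integral_same

lemma shiftFn_nonneg (hgm : MonotoneOn g (Ici 0)) (hg0 : g 0 = 0) (ha₀ : 0 ≤ a₀)
    {t : ℝ} (ht : 0 ≤ t) : 0 ≤ shiftFn g a₀ t := by
  rw [shiftFn_eq]
  apply intervalIntegral.integral_nonneg ht
  intro s hs
  exact shiftIntegrand_nonneg hgm hg0 ha₀ hs.1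

lemma shiftFn_one_pos (hgm : MonotoneOn g (Ici 0)) (hg0 : g 0 = 0) (ha₀ : 0 ≤ a₀)
    (hgpos : ∀ x : ℝ, 0 < x → 0 < g x) : 0 < shiftFn g a₀ 1 := by
  have hhalf : (0:ℝ) < shiftIntegrand g a₀ (1/2) := by
    rw [shiftIntegrand]
    have h1 : 0 < g (a₀ + 1/2) := hgpos _ (by linarith)
    positivity
  have hint1 : IntervalIntegrable (shiftIntegrand g a₀) volume 0 (1/2) :=
    shiftIntegrand_intable hgm hg0 ha₀ (by norm_num)
  have hint2 : IntervalIntegrable (shiftIntegrand g a₀) volume (1/2) 1 := by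
    apply MonotoneOn.intervalIntegrable
    apply (shiftIntegrand_mono hgm hg0 ha₀).mono
    rw [uIcc_of_le (by norm_num : (1:ℝ)/2 ≤ 1)]
    intro x hx
    exact le_trans (by norm_num) hx.1
  have hadd : shiftFn g a₀ 1
      = (∫ s in (0:ℝ)..(1/2), shiftIntegrand g a₀ s)
        + ∫ s in (1/2:ℝ)..1, shiftIntegrand g a₀ s := by
    rw [shiftFn_eq, ← intervalIntegral.integral_add_adjacent_intervals hint1 hint2]
  have h1 : 0 ≤ ∫ s in (0:ℝ)..(1/2), shiftIntegrand g a₀ s := by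
    apply intervalIntegral.integral_nonneg (by norm_num)
    intro s hs
    exact shiftIntegrand_nonneg hgm hg0 ha₀ hs.1
  have h2 : (1/2) * shiftIntegrand g a₀ (1/2) ≤ ∫ s in (1/2:ℝ)..1, shiftIntegrand g a₀ s := by
    have hconst : ∫ _ in (1/2:ℝ)..1, shiftIntegrand g a₀ (1/2)
        = (1 - 1/2) * shiftIntegrand g a₀ (1/2) := by
      rw [intervalIntegral.integral_const, smul_eq_mul]
    have := intervalIntegral.integral_mono_on (by norm_num : (1:ℝ)/2 ≤ 1)
      (intervalIntegrable_const) hint2 (fun x hx => by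
        exact shiftIntegrand_mono hgm hg0 ha₀ (by norm_num : ((1:ℝ)/2) ∈ Ici (0:ℝ))
          (le_trans (by norm_num) hx.1 : x ∈ Ici (0:ℝ)) hx.1)
    rw [hconst] at this
    linarith
  linarith

lemma shiftIntegrand_bound {a b B : ℝ} (ha : 1 < a) (hab : a ≤ b) (hB : 1 ≤ B)
    (hgm : MonotoneOn g (Ici 0)) (hg0 : g 0 = 0)
    (hgb : ∀ lam t : ℝ, 1 ≤ lam → 0 < t →
      B⁻¹ * lam ^ (a - 1) * g t ≤ g (lam * t) ∧ g (lam * t) ≤ B * lam ^ (b - 1) * g t)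
    (ha₀ : 0 ≤ a₀) {lam s : ℝ} (hlam : 1 ≤ lam) (hs : 0 ≤ s) :
    B⁻¹ * lam ^ (min a 2 - 1) * shiftIntegrand g a₀ s ≤ shiftIntegrand g a₀ (lam * s) ∧
    shiftIntegrand g a₀ (lam * s) ≤ B * lam ^ (max b 2 - 1) * shiftIntegrand g a₀ s := by
  have hB0 : (0:ℝ) < B := lt_of_lt_of_le one_pos hB
  have hlam0 : (0:ℝ) < lam := lt_of_lt_of_le one_pos hlam
  rcases eq_or_lt_of_le hs with rfl | hs0
  · rw [mul_zero]
    constructor <;> · rw [shiftIntegrand, mul_zero, zero_div] <;> simp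
  have hx : (0:ℝ) < a₀ + s := by positivity
  set x : ℝ := a₀ + s with hxdef
  set μ : ℝ := (a₀ + lam * s) / x with hμdef
  have hμx : a₀ + lam * s = μ * x := by rw [hμdef]; field_simp
  have hμ1 : 1 ≤ μ := by
    rw [hμdef, le_div_iff₀ hx]
    have : s ≤ lam * s := le_mul_of_one_le_left hs0.le hlam
    simp only [hxdef]; linarith
  have hμlam : μ ≤ lam := by
    rw [hμdef, div_le_iff₀ hx]
    have h1 : a₀ ≤ lam * a₀ := le_mul_of_one_le_left ha₀ hlam
    simp only [hxdef]; ring_nf; linarith [mul_le_mul_of_nonneg_left (le_refl s) hlam0.le]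
  have hμ0 : (0:ℝ) < μ := lt_of_lt_of_le one_pos hμ1
  have hgx : 0 ≤ g x := by
    rw [← hg0]; exact hgm self_mem_Ici (mem_Ici.mpr hx.le) hx.le
  have hμb := hgb μ x hμ1 hx
  set N : ℝ := g (a₀ + lam * s) with hN
  have hNb : B⁻¹ * μ ^ (a - 1) * g x ≤ N ∧ N ≤ B * μ ^ (b - 1) * g x := by
    rw [hN, hμx]; exact hμb
  have hN0 : 0 ≤ N := by
    rw [hN, ← hg0]
    exact hgm self_mem_Ici (mem_Ici.mpr (by positivity)) (by positivity)
  have hNμ : N = g (μ * x) := by rw [hN, hμx]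
  have e1 : shiftIntegrand g a₀ (lam * s) = (N / μ) * lam * (s / x) := by
    rw [shiftIntegrand, hμx, ← hNμ]
    field_simp
  have e2 : shiftIntegrand g a₀ s = g x * (s / x) := by
    rw [shiftIntegrand, ← hxdef]
    ring
  have hsx : (0:ℝ) ≤ s / x := by positivity
  have hμsplit : ∀ c : ℝ, μ ^ (c - 1) = μ ^ (c - 2) * μ := by
    intro c
    nth_rewrite 1 [show c - 1 = (c - 2) + 1 by ring]
    rw [Real.rpow_add hμ0, Real.rpow_one]
  have hlamsplit : ∀ c : ℝ, lam ^ (c - 1) = lam ^ (c - 2) * lam := by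
    intro c
    nth_rewrite 1 [show c - 1 = (c - 2) + 1 by ring]
    rw [Real.rpow_add hlam0, Real.rpow_one]
  constructor
  · -- lower bound
    have hμcomp : lam ^ (min a 2 - 2) ≤ μ ^ (a - 2) := by
      rcases le_total a 2 with hc | hc
      · rw [min_eq_left hc]
        exact Real.rpow_le_rpow_of_nonpos hμ0 hμlam (by linarith)
      · rw [min_eq_right hc, show (2:ℝ) - 2 = 0 by ring, Real.rpow_zero]
        exact Real.one_le_rpow hμ1 (by linarith)
    rw [e1, e2]
    have key : B⁻¹ * lam ^ (min a 2 - 1) * g x ≤ (N / μ) * lam := by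
      have k1 : B⁻¹ * μ ^ (a - 2) * g x ≤ N / μ := by
        rw [le_div_iff₀ hμ0]
        calc B⁻¹ * μ ^ (a - 2) * g x * μ = B⁻¹ * (μ ^ (a - 2) * μ) * g x := by ring
          _ = B⁻¹ * μ ^ (a - 1) * g x := by rw [← hμsplit]
          _ ≤ N := hNb.1
      calc B⁻¹ * lam ^ (min a 2 - 1) * g x
          = (B⁻¹ * lam ^ (min a 2 - 2) * g x) * lam := by
            rw [hlamsplit]; ring
        _ ≤ (B⁻¹ * μ ^ (a - 2) * g x) * lam := by
            apply mul_le_mul_of_nonneg_right _ hlam0.le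
            exact mul_le_mul_of_nonneg_right
              (mul_le_mul_of_nonneg_left hμcomp (by positivity)) hgx
        _ ≤ (N / μ) * lam := mul_le_mul_of_nonneg_right k1 hlam0.le
    calc B⁻¹ * lam ^ (min a 2 - 1) * (g x * (s / x))
        = (B⁻¹ * lam ^ (min a 2 - 1) * g x) * (s / x) := by ring
      _ ≤ ((N / μ) * lam) * (s / x) := mul_le_mul_of_nonneg_right key hsx
      _ = N / μ * lam * (s / x) := by ring
  · -- upper bound
    have hμcomp : μ ^ (b - 2) ≤ lam ^ (max b 2 - 2) := by
      rcases le_total 2 b with hc | hc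
      · rw [max_eq_left hc]
        exact Real.rpow_le_rpow hμ0.le hμlam (by linarith)
      · rw [max_eq_right hc, show (2:ℝ) - 2 = 0 by ring, Real.rpow_zero]
        exact Real.rpow_le_one_of_one_le_of_nonpos hμ1 (by linarith)
    rw [e1, e2]
    have key : (N / μ) * lam ≤ B * lam ^ (max b 2 - 1) * g x := by
      have k1 : N / μ ≤ B * μ ^ (b - 2) * g x := by
        rw [div_le_iff₀ hμ0]
        calc N ≤ B * μ ^ (b - 1) * g x := hNb.2
          _ = B * μ ^ (b - 2) * g x * μ := by rw [hμsplit]; ring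
      calc (N / μ) * lam ≤ (B * μ ^ (b - 2) * g x) * lam :=
            mul_le_mul_of_nonneg_right k1 hlam0.le
        _ ≤ (B * lam ^ (max b 2 - 2) * g x) * lam := by
            apply mul_le_mul_of_nonneg_right _ hlam0.le
            exact mul_le_mul_of_nonneg_right
              (mul_le_mul_of_nonneg_left hμcomp hB0.le) hgx
        _ = B * lam ^ (max b 2 - 1) * g x := by rw [hlamsplit]; ring
    calc N / μ * lam * (s / x) ≤ (B * lam ^ (max b 2 - 1) * g x) * (s / x) :=
          mul_le_mul_of_nonneg_right key hsx
      _ = B * lam ^ (max b 2 - 1) * (g x * (s / x)) := by ring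

lemma shift_bdds {a b B : ℝ} (ha : 1 < a) (hab : a ≤ b) (hB : 1 ≤ B)
    (hgm : MonotoneOn g (Ici 0)) (hg0 : g 0 = 0)
    (hgb : ∀ lam t : ℝ, 1 ≤ lam → 0 < t →
      B⁻¹ * lam ^ (a - 1) * g t ≤ g (lam * t) ∧ g (lam * t) ≤ B * lam ^ (b - 1) * g t)
    (ha₀ : 0 ≤ a₀) : Bdds (shiftFn g a₀) (min a 2) (max b 2) B := by
  intro lam t hlam ht
  have hB0 : (0:ℝ) < B := lt_of_lt_of_le one_pos hB
  have hlam0 : (0:ℝ) < lam := lt_of_lt_of_le one_pos hlam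
  have hsub : shiftFn g a₀ (lam * t) = lam * ∫ s in (0:ℝ)..t, shiftIntegrand g a₀ (lam * s) := by
    have h := intervalIntegral.smul_integral_comp_mul_left (a := 0) (b := t)
      (shiftIntegrand g a₀) lam
    rw [mul_zero] at h
    rw [shiftFn_eq, ← h, smul_eq_mul]
  have hintl : IntervalIntegrable (fun s => shiftIntegrand g a₀ (lam * s)) volume 0 t := by
    apply MonotoneOn.intervalIntegrable
    intro x hx y hy hxy
    rw [uIcc_of_le ht] at hx hy
    exact shiftIntegrand_mono hgm hg0 ha₀
      (mem_Ici.mpr (mul_nonneg hlam0.le hx.1))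
      (mem_Ici.mpr (mul_nonneg hlam0.le hy.1))
      (mul_le_mul_of_nonneg_left hxy hlam0.le)
  have hint : IntervalIntegrable (shiftIntegrand g a₀) volume 0 t :=
    shiftIntegrand_intable hgm hg0 ha₀ ht
  have hlamM : lam * lam ^ (min a 2 - 1) = lam ^ (min a 2) := by
    nth_rewrite 2 [show min a 2 = 1 + (min a 2 - 1) by ring]
    rw [Real.rpow_add hlam0, Real.rpow_one]
  have hlamM' : lam * lam ^ (max b 2 - 1) = lam ^ (max b 2) := by
    nth_rewrite 2 [show max b 2 = 1 + (max b 2 - 1) by ring]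
    rw [Real.rpow_add hlam0, Real.rpow_one]
  constructor
  · -- lower
    have hmono : ∫ s in (0:ℝ)..t, B⁻¹ * lam ^ (min a 2 - 1) * shiftIntegrand g a₀ s
        ≤ ∫ s in (0:ℝ)..t, shiftIntegrand g a₀ (lam * s) := by
      apply intervalIntegral.integral_mono_on ht (hint.const_mul _) hintl
      intro s hsmem
      exact (shiftIntegrand_bound ha hab hB hgm hg0 hgb ha₀ hlam hsmem.1).1
    rw [intervalIntegral.integral_const_mul] at hmono
    rw [hsub, shiftFn_eq]
    calc B⁻¹ * lam ^ (min a 2) * ∫ s in (0:ℝ)..t, shiftIntegrand g a₀ s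
        = lam * (B⁻¹ * lam ^ (min a 2 - 1) * ∫ s in (0:ℝ)..t, shiftIntegrand g a₀ s) := by
          rw [← hlamM]; ring
      _ ≤ lam * ∫ s in (0:ℝ)..t, shiftIntegrand g a₀ (lam * s) :=
          mul_le_mul_of_nonneg_left hmono hlam0.le
  · -- upper
    have hmono : ∫ s in (0:ℝ)..t, shiftIntegrand g a₀ (lam * s)
        ≤ ∫ s in (0:ℝ)..t, B * lam ^ (max b 2 - 1) * shiftIntegrand g a₀ s := by
      apply intervalIntegral.integral_mono_on ht hintl (hint.const_mul _)
      intro s hsmem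
      exact (shiftIntegrand_bound ha hab hB hgm hg0 hgb ha₀ hlam hsmem.1).2
    rw [intervalIntegral.integral_const_mul] at hmono
    rw [hsub, shiftFn_eq]
    calc lam * ∫ s in (0:ℝ)..t, shiftIntegrand g a₀ (lam * s)
        ≤ lam * (B * lam ^ (max b 2 - 1) * ∫ s in (0:ℝ)..t, shiftIntegrand g a₀ s) :=
          mul_le_mul_of_nonneg_left hmono hlam0.le
      _ = B * lam ^ (max b 2) * ∫ s in (0:ℝ)..t, shiftIntegrand g a₀ s := by
          rw [← hlamM']; ring

end Shift

section PhiBounds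

variable {φ φ' φ'' : ℝ → ℝ} {c₀ c₁ cm p q K₁ : ℝ}

lemma phi_hasDerivAt (hφ : AssumptionPhi φ φ' φ'' c₀ c₁ cm) {x : ℝ} (hx : 0 < x) :
    HasDerivAt φ (φ' x) x :=
  (hφ.nfun.hasDeriv x hx.le).hasDerivAt (Ici_mem_nhds hx)

lemma phi_contOn (hφ : AssumptionPhi φ φ' φ'' c₀ c₁ cm) : ContinuousOn φ (Ici 0) :=
  fun x hx => (hφ.nfun.hasDeriv x hx).continuousWithinAt

/-- Mean value theorem instance for `φ`. -/
lemma phi_mvt (hφ : AssumptionPhi φ φ' φ'' c₀ c₁ cm) {x y : ℝ} (hx : 0 ≤ x) (hxy : x < y) :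
    ∃ ξ ∈ Ioo x y, φ y - φ x = φ' ξ * (y - x) := by
  obtain ⟨ξ, hξ, hval⟩ := exists_hasDerivAt_eq_slope φ φ' hxy
    ((phi_contOn hφ).mono (Icc_subset_Ici_self.trans
      (by rw [Ici_subset_Ici]; exact hx; )))
    (fun z hz => phi_hasDerivAt hφ (lt_of_le_of_lt hx hz.1))
  refine ⟨ξ, hξ, ?_⟩
  rw [hval]
  exact (div_mul_cancel₀ _ (sub_ne_zero.mpr hxy.ne')).symm

lemma phi_nonneg (hφ : AssumptionPhi φ φ' φ'' c₀ c₁ cm) {t : ℝ} (ht : 0 ≤ t) : 0 ≤ φ t := by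
  rcases eq_or_lt_of_le ht with rfl | ht0
  · rw [hφ.nfun.zero]
  obtain ⟨ξ, hξ, hval⟩ := phi_mvt hφ le_rfl ht0
  have hφ'ξ : 0 ≤ φ' ξ := by
    rw [← hφ.nfun.derivZero]
    exact hφ.nfun.mono self_mem_Ici (mem_Ici.mpr hξ.1.le) hξ.1.le
  rw [hφ.nfun.zero] at hval
  nlinarith

lemma phi_le_mul_deriv (hφ : AssumptionPhi φ φ' φ'' c₀ c₁ cm) {t : ℝ} (ht : 0 < t) :
    φ t ≤ t * φ' t := by
  obtain ⟨ξ, hξ, hval⟩ := phi_mvt hφ le_rfl ht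
  have h1 : φ' ξ ≤ φ' t :=
    hφ.nfun.mono (mem_Ici.mpr hξ.1.le) (mem_Ici.mpr ht.le) hξ.2.le
  have hφ'ξ : 0 ≤ φ' ξ := by
    rw [← hφ.nfun.derivZero]
    exact hφ.nfun.mono self_mem_Ici (mem_Ici.mpr hξ.1.le) hξ.1.le
  rw [hφ.nfun.zero] at hval
  nlinarith

lemma mul_deriv_le_phi_two (hφ : AssumptionPhi φ φ' φ'' c₀ c₁ cm) {t : ℝ} (ht : 0 < t) :
    t * φ' t ≤ φ (2 * t) := by
  obtain ⟨ξ, hξ, hval⟩ := phi_mvt hφ ht.le (by linarith : t < 2 * t)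
  have h1 : φ' t ≤ φ' ξ :=
    hφ.nfun.mono (mem_Ici.mpr ht.le) (mem_Ici.mpr (by linarith [hξ.1] : (0:ℝ) ≤ ξ)) hξ.1.le
  have h2 : 0 ≤ φ t := phi_nonneg hφ ht.le
  nlinarith

lemma phi_one_pos (hφ : AssumptionPhi φ φ' φ'' c₀ c₁ cm) : 0 < φ 1 := by
  obtain ⟨ξ, hξ, hval⟩ := phi_mvt hφ le_rfl one_pos
  have : 0 < φ' ξ := hφ.nfun.derivPos ξ hξ.1
  rw [hφ.nfun.zero] at hval
  nlinarith

lemma K₁_ge_one (hφ : AssumptionPhi φ φ' φ'' c₀ c₁ cm) (hT : TypeT φ p q K₁) : 1 ≤ K₁ := by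
  have := hT 1 1 zero_le_one zero_le_one
  rw [one_mul, Real.one_rpow, Real.one_rpow, max_self, mul_one] at this
  have h1 := phi_one_pos hφ
  nlinarith

lemma phi'_nonneg (hφ : AssumptionPhi φ φ' φ'' c₀ c₁ cm) {t : ℝ} (ht : 0 ≤ t) : 0 ≤ φ' t := by
  rw [← hφ.nfun.derivZero]
  exact hφ.nfun.mono self_mem_Ici (mem_Ici.mpr ht) ht

lemma phi'_bounds (hφ : AssumptionPhi φ φ' φ'' c₀ c₁ cm) (hT : TypeT φ p q K₁)
    (hp : 1 < p) (hpq : p ≤ q) :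
    ∀ lam t : ℝ, 1 ≤ lam → 0 < t →
      (2 ^ q * K₁ ^ 2)⁻¹ * lam ^ (p - 1) * φ' t ≤ φ' (lam * t) ∧
      φ' (lam * t) ≤ (2 ^ q * K₁ ^ 2) * lam ^ (q - 1) * φ' t := by
  have hK1 : 1 ≤ K₁ := K₁_ge_one hφ hT
  have hK0 : (0:ℝ) < K₁ := lt_of_lt_of_le one_pos hK1
  have h2q : (1:ℝ) ≤ 2 ^ q := Real.one_le_rpow one_le_two (by linarith)
  intro lam t hlam ht
  have hlam0 : (0:ℝ) < lam := lt_of_lt_of_le one_pos hlam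
  have hlt : (0:ℝ) < lam * t := by positivity
  have hφ't : 0 ≤ φ' t := phi'_nonneg hφ ht.le
  have hφ'lt : 0 ≤ φ' (lam * t) := phi'_nonneg hφ hlt.le
  have hφt : 0 ≤ φ t := phi_nonneg hφ ht.le
  have hφlt : 0 ≤ φ (lam * t) := phi_nonneg hφ hlt.le
  -- doubling for φ : φ (2 * x) ≤ K₁ * 2^q * φ x for x ≥ 0
  have hdouble : ∀ x : ℝ, 0 ≤ x → φ (2 * x) ≤ K₁ * 2 ^ q * φ x := by
    intro x hx
    have := hT 2 x (by norm_num) hx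
    have hmax : max ((2:ℝ) ^ p) (2 ^ q) = 2 ^ q :=
      max_eq_right (Real.rpow_le_rpow_of_exponent_le one_le_two hpq)
    rw [hmax] at this
    linarith [this]
  have h2q0 : (0:ℝ) < 2 ^ q := by positivity
  constructor
  · -- lower bound
    have h1 : K₁⁻¹ * lam ^ p * φ t ≤ φ (lam * t) := by
      have hthis := hT lam⁻¹ (lam * t) (by positivity) hlt.le
      rw [← mul_assoc, inv_mul_cancel₀ hlam0.ne', one_mul] at hthis
      have hinv1 : lam⁻¹ ≤ 1 := inv_le_one_of_one_le₀ hlam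
      have hmax : max (lam⁻¹ ^ p) (lam⁻¹ ^ q) = lam⁻¹ ^ p :=
        max_eq_left (Real.rpow_le_rpow_of_exponent_ge (by positivity) hinv1 hpq)
      rw [hmax, Real.inv_rpow hlam0.le] at hthis
      have hlp : (0:ℝ) < lam ^ p := Real.rpow_pos_of_pos hlam0 p
      calc K₁⁻¹ * lam ^ p * φ t
          ≤ K₁⁻¹ * lam ^ p * (K₁ * (lam ^ p)⁻¹ * φ (lam * t)) :=
            mul_le_mul_of_nonneg_left hthis (by positivity)
        _ = φ (lam * t) := by field_simp
    have h2 : φ (lam * t) ≤ (lam * t) * φ' (lam * t) := phi_le_mul_deriv hφ hlt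
    have h3 : t * φ' t ≤ K₁ * 2 ^ q * φ t :=
      (mul_deriv_le_phi_two hφ ht).trans (hdouble t ht.le)
    have h3' : (K₁ * 2 ^ q)⁻¹ * (t * φ' t) ≤ φ t := by
      rw [inv_mul_le_iff₀ (by positivity)]
      linarith
    have hsplit : lam ^ p = lam ^ (p - 1) * lam := by
      nth_rewrite 1 [show p = (p - 1) + 1 by ring]
      rw [Real.rpow_add hlam0, Real.rpow_one]
    have main : ((2 ^ q * K₁ ^ 2)⁻¹ * lam ^ (p - 1) * φ' t) * (lam * t)
        ≤ φ' (lam * t) * (lam * t) := by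
      calc ((2 ^ q * K₁ ^ 2)⁻¹ * lam ^ (p - 1) * φ' t) * (lam * t)
          = K₁⁻¹ * lam ^ p * ((K₁ * 2 ^ q)⁻¹ * (t * φ' t)) := by
            rw [hsplit]; field_simp
        _ ≤ K₁⁻¹ * lam ^ p * φ t := mul_le_mul_of_nonneg_left h3' (by positivity)
        _ ≤ φ (lam * t) := h1
        _ ≤ (lam * t) * φ' (lam * t) := h2
        _ = φ' (lam * t) * (lam * t) := by ring
    exact le_of_mul_le_mul_right main hlt
  · -- upper bound
    have h4 : (lam * t) * φ' (lam * t) ≤ φ (2 * (lam * t)) := mul_deriv_le_phi_two hφ hlt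
    have h5 : φ (2 * lam * t) ≤ K₁ * (2 * lam) ^ q * φ t := by
      have hthis := hT (2 * lam) t (by linarith) ht.le
      have hmax : max ((2 * lam) ^ p) ((2 * lam) ^ q) = (2 * lam) ^ q :=
        max_eq_right (Real.rpow_le_rpow_of_exponent_le (by linarith) hpq)
      rw [hmax] at hthis
      exact hthis
    have h6 : φ t ≤ t * φ' t := phi_le_mul_deriv hφ ht
    have hmulr : (2 * lam) ^ q = 2 ^ q * lam ^ q :=
      Real.mul_rpow (by norm_num) hlam0.le
    have hsplitq : lam ^ q = lam ^ (q - 1) * lam := by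
      nth_rewrite 1 [show q = (q - 1) + 1 by ring]
      rw [Real.rpow_add hlam0, Real.rpow_one]
    have main : φ' (lam * t) * (lam * t)
        ≤ ((2 ^ q * K₁ ^ 2) * lam ^ (q - 1) * φ' t) * (lam * t) := by
      have hlq : (0:ℝ) ≤ lam ^ (q - 1) := Real.rpow_nonneg hlam0.le _
      calc φ' (lam * t) * (lam * t) = (lam * t) * φ' (lam * t) := by ring
        _ ≤ φ (2 * (lam * t)) := h4
        _ = φ (2 * lam * t) := by rw [mul_assoc]
        _ ≤ K₁ * (2 * lam) ^ q * φ t := h5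
        _ = K₁ * 2 ^ q * lam ^ q * φ t := by rw [hmulr]; ring
        _ ≤ K₁ * 2 ^ q * lam ^ q * (t * φ' t) := by
            apply mul_le_mul_of_nonneg_left h6 (by positivity)
        _ = (K₁ * 2 ^ q * lam ^ (q - 1) * φ' t) * (lam * t) := by
            rw [hsplitq]; ring
        _ ≤ ((2 ^ q * K₁ ^ 2) * lam ^ (q - 1) * φ' t) * (lam * t) := by
            have hco : K₁ * 2 ^ q ≤ 2 ^ q * K₁ ^ 2 := by
              nlinarith [mul_nonneg (mul_nonneg h2q0.le hK0.le) (sub_nonneg.mpr hK1)]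
            have : K₁ * 2 ^ q * lam ^ (q - 1) * φ' t
                ≤ (2 ^ q * K₁ ^ 2) * lam ^ (q - 1) * φ' t := by
              apply mul_le_mul_of_nonneg_right _ hφ't
              exact mul_le_mul_of_nonneg_right hco hlq
            exact mul_le_mul_of_nonneg_right this hlt.le
    exact le_of_mul_le_mul_right main hlt

end PhiBounds

section RcInv

variable {φ φ' φ'' : ℝ → ℝ} {c₀ c₁ cm p q K₁ : ℝ}

lemma phi'_strictMono (hφ : AssumptionPhi φ φ' φ'' c₀ c₁ cm) : StrictMonoOn φ' (Ici 0) := by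
  apply strictMonoOn_of_deriv_pos (convex_Ici 0) hφ.contOne
  intro x hx
  rw [interior_Ici, mem_Ioi] at hx
  rw [(hφ.derivTwo x hx).deriv]
  have h1 := hφ.upperBound x hx
  have h2 := hφ.nfun.derivPos x hx
  have h3 := hφ.c1_pos
  nlinarith [mul_pos h3 hx]

lemma phi'_surj (hφ : AssumptionPhi φ φ' φ'' c₀ c₁ cm) (hT : TypeT φ p q K₁)
    (hp : 1 < p) (hpq : p ≤ q) {u : ℝ} (hu : 0 ≤ u) : ∃ s, 0 ≤ s ∧ φ' s = u := by
  set C₁ : ℝ := 2 ^ q * K₁ ^ 2 with hC₁def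
  have hK1 : 1 ≤ K₁ := K₁_ge_one hφ hT
  have hC₁0 : (0:ℝ) < C₁ := by positivity
  have hφ'1 : 0 < φ' 1 := hφ.nfun.derivPos 1 one_pos
  set X : ℝ := C₁ * (u + 1) / φ' 1 with hXdef
  have hX0 : 0 < X := by positivity
  set lam : ℝ := max 1 (X ^ (p - 1)⁻¹) with hlamdef
  have hlam1 : (1:ℝ) ≤ lam := le_max_left _ _
  have hlam0 : (0:ℝ) < lam := lt_of_lt_of_le one_pos hlam1
  have hp1 : (0:ℝ) < p - 1 := by linarith
  have hlamX : X ≤ lam ^ (p - 1) := by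
    rcases le_or_gt X 1 with hX1 | hX1
    · exact hX1.trans (Real.one_le_rpow hlam1 hp1.le)
    · have h1 : X ^ (p - 1)⁻¹ ≤ lam := le_max_right _ _
      have h2 : (X ^ (p - 1)⁻¹) ^ (p - 1) ≤ lam ^ (p - 1) :=
        Real.rpow_le_rpow (Real.rpow_nonneg hX0.le _) h1 hp1.le
      rwa [← Real.rpow_mul hX0.le, inv_mul_cancel₀ hp1.ne', Real.rpow_one] at h2
  have hbound := (phi'_bounds hφ hT hp hpq lam 1 hlam1 one_pos).1
  rw [mul_one] at hbound
  have hkey : u ≤ φ' lam := by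
    have h1 : C₁⁻¹ * X * φ' 1 ≤ C₁⁻¹ * lam ^ (p - 1) * φ' 1 := by
      apply mul_le_mul_of_nonneg_right _ hφ'1.le
      exact mul_le_mul_of_nonneg_left hlamX (by positivity)
    have h2 : C₁⁻¹ * X * φ' 1 = u + 1 := by
      rw [hXdef]; field_simp
    nlinarith
  have hIcc : u ∈ Icc (φ' 0) (φ' lam) := by
    rw [hφ.nfun.derivZero]
    exact ⟨hu, hkey⟩
  have hsub : Icc (φ' 0) (φ' lam) ⊆ φ' '' Icc 0 lam :=
    intermediate_value_Icc hlam0.le (hφ.contOne.mono Icc_subset_Ici_self)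
  obtain ⟨s, hs, hfs⟩ := hsub hIcc
  exact ⟨s, hs.1, hfs⟩

lemma rcInv_spec (hφ : AssumptionPhi φ φ' φ'' c₀ c₁ cm) (hT : TypeT φ p q K₁)
    (hp : 1 < p) (hpq : p ≤ q) {u : ℝ} (hu : 0 ≤ u) :
    0 ≤ rcInv φ' u ∧ φ' (rcInv φ' u) = u := by
  obtain ⟨s, hs0, hfs⟩ := phi'_surj hφ hT hp hpq hu
  have hset : {s' : ℝ | 0 ≤ s' ∧ φ' s' ≤ u} = Icc 0 s := by
    ext s'
    simp only [mem_setOf_eq, mem_Icc]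
    constructor
    · rintro ⟨h1, h2⟩
      refine ⟨h1, ?_⟩
      by_contra hgt
      push_neg at hgt
      have := phi'_strictMono hφ (mem_Ici.mpr hs0) (mem_Ici.mpr h1) hgt
      rw [hfs] at this
      linarith
    · rintro ⟨h1, h2⟩
      refine ⟨h1, ?_⟩
      rw [← hfs]
      exact (phi'_strictMono hφ).monotoneOn (mem_Ici.mpr h1) (mem_Ici.mpr hs0) h2
  rw [rcInv, hset, csSup_Icc hs0]
  exact ⟨hs0, hfs⟩

lemma rcInv_zero (hφ : AssumptionPhi φ φ' φ'' c₀ c₁ cm) (hT : TypeT φ p q K₁)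
    (hp : 1 < p) (hpq : p ≤ q) : rcInv φ' 0 = 0 := by
  obtain ⟨h0, hf⟩ := rcInv_spec hφ hT hp hpq le_rfl
  rcases eq_or_lt_of_le h0 with h | h
  · exact h.symm
  · have := hφ.nfun.derivPos _ h
    rw [hf] at this
    linarith

lemma rcInv_monoOn (hφ : AssumptionPhi φ φ' φ'' c₀ c₁ cm) (hT : TypeT φ p q K₁)
    (hp : 1 < p) (hpq : p ≤ q) : MonotoneOn (rcInv φ') (Ici 0) := by
  intro u hu v hv huv
  obtain ⟨hu0, hfu⟩ := rcInv_spec hφ hT hp hpq (mem_Ici.mp hu)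
  obtain ⟨hv0, hfv⟩ := rcInv_spec hφ hT hp hpq (mem_Ici.mp hv)
  refine ((phi'_strictMono hφ).le_iff_le (mem_Ici.mpr hu0) (mem_Ici.mpr hv0)).mp ?_
  rw [hfu, hfv]
  exact huv

lemma rcInv_pos (hφ : AssumptionPhi φ φ' φ'' c₀ c₁ cm) (hT : TypeT φ p q K₁)
    (hp : 1 < p) (hpq : p ≤ q) {u : ℝ} (hu : 0 < u) : 0 < rcInv φ' u := by
  obtain ⟨h0, hf⟩ := rcInv_spec hφ hT hp hpq hu.le
  rcases eq_or_lt_of_le h0 with h | h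
  · rw [← h, hφ.nfun.derivZero] at hf
    linarith
  · exact h

lemma rcInv_bounds (hφ : AssumptionPhi φ φ' φ'' c₀ c₁ cm) (hT : TypeT φ p q K₁)
    (hp : 1 < p) (hpq : p ≤ q) :
    ∀ lam u : ℝ, 1 ≤ lam → 0 < u →
      ((2 ^ q * K₁ ^ 2) ^ (conjExp p - 1))⁻¹ * lam ^ (conjExp q - 1) * rcInv φ' u
        ≤ rcInv φ' (lam * u) ∧
      rcInv φ' (lam * u)
        ≤ (2 ^ q * K₁ ^ 2) ^ (conjExp p - 1) * lam ^ (conjExp p - 1) * rcInv φ' u := by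
  have hK1 : 1 ≤ K₁ := K₁_ge_one hφ hT
  have hq : 1 < q := lt_of_lt_of_le hp hpq
  set C₁ : ℝ := 2 ^ q * K₁ ^ 2 with hC₁def
  have h2q : (1:ℝ) ≤ 2 ^ q := Real.one_le_rpow one_le_two (by linarith)
  have hC₁1 : 1 ≤ C₁ := by nlinarith
  have hC₁0 : (0:ℝ) < C₁ := lt_of_lt_of_le one_pos hC₁1
  have hp'1 : 1 < conjExp p := one_lt_conjExp hp
  have hq'1 : 1 < conjExp q := one_lt_conjExp hq
  have hq'p' : conjExp q ≤ conjExp p := conjExp_anti hp hpq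
  set B₂ : ℝ := C₁ ^ (conjExp p - 1) with hB₂def
  have hB₂1 : 1 ≤ B₂ := Real.one_le_rpow hC₁1 (by linarith)
  have hB₂0 : (0:ℝ) < B₂ := lt_of_lt_of_le one_pos hB₂1
  intro lam u hlam hu
  have hlam0 : (0:ℝ) < lam := lt_of_lt_of_le one_pos hlam
  have hlu : 0 < lam * u := by positivity
  obtain ⟨ht0, hft⟩ := rcInv_spec hφ hT hp hpq hu.le
  set t : ℝ := rcInv φ' u with htdef
  have htpos : 0 < t := rcInv_pos hφ hT hp hpq hu
  obtain ⟨hl0, hfl⟩ := rcInv_spec hφ hT hp hpq hlu.le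
  constructor
  · -- lower bound
    rcases le_or_gt lam C₁ with hcase | hcase
    · -- lam ≤ C₁ : use monotonicity
      have hmono : t ≤ rcInv φ' (lam * u) := by
        apply rcInv_monoOn hφ hT hp hpq (mem_Ici.mpr hu.le) (mem_Ici.mpr hlu.le)
        exact le_mul_of_one_le_left hu.le hlam
      have hco : B₂⁻¹ * lam ^ (conjExp q - 1) ≤ 1 := by
        have h1 : lam ^ (conjExp q - 1) ≤ C₁ ^ (conjExp q - 1) :=
          Real.rpow_le_rpow hlam0.le hcase (by linarith)
        have h2 : C₁ ^ (conjExp q - 1) ≤ B₂ :=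
          Real.rpow_le_rpow_of_exponent_le hC₁1 (by linarith)
        rw [inv_mul_le_iff₀ hB₂0, mul_one]
        exact h1.trans h2
      calc B₂⁻¹ * lam ^ (conjExp q - 1) * t ≤ 1 * t :=
            mul_le_mul_of_nonneg_right hco htpos.le
        _ = t := one_mul t
        _ ≤ rcInv φ' (lam * u) := hmono
    · -- C₁ < lam
      set τ : ℝ := (lam / C₁) ^ (conjExp q - 1) with hτdef
      have hlamC : 1 ≤ lam / C₁ := (one_le_div hC₁0).mpr hcase.le
      have hτ1 : 1 ≤ τ := Real.one_le_rpow hlamC (by linarith)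
      have hτ0 : 0 < τ := lt_of_lt_of_le one_pos hτ1
      have hτq : τ ^ (q - 1) = lam / C₁ := by
        rw [hτdef, ← Real.rpow_mul (by positivity), conjExp_sub_one hq,
          inv_mul_cancel₀ (by linarith : q - 1 ≠ 0), Real.rpow_one]
      have hup := (phi'_bounds hφ hT hp hpq τ t hτ1 htpos).2
      rw [hft, hτq] at hup
      have hupval : φ' (τ * t) ≤ lam * u := by
        have : C₁ * (lam / C₁) * u = lam * u := by field_simp
        calc φ' (τ * t) ≤ C₁ * (lam / C₁) * u := by
              calc φ' (τ * t) ≤ 2 ^ q * K₁ ^ 2 * (lam / C₁) * u := hup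
                _ = C₁ * (lam / C₁) * u := by rw [hC₁def]
          _ = lam * u := this
      have hle : τ * t ≤ rcInv φ' (lam * u) := by
        refine ((phi'_strictMono hφ).le_iff_le
          (mem_Ici.mpr (by positivity)) (mem_Ici.mpr hl0)).mp ?_
        rw [hfl]
        exact hupval
      refine le_trans ?_ hle
      have hτlow : B₂⁻¹ * lam ^ (conjExp q - 1) ≤ τ := by
        rw [hτdef, Real.div_rpow hlam0.le hC₁0.le]
        have h1 : C₁ ^ (conjExp q - 1) ≤ B₂ :=
          Real.rpow_le_rpow_of_exponent_le hC₁1 (by linarith)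
        have h2 : (0:ℝ) < C₁ ^ (conjExp q - 1) := by positivity
        rw [div_eq_mul_inv, mul_comm (lam ^ (conjExp q - 1))]
        apply mul_le_mul_of_nonneg_right _ (Real.rpow_nonneg hlam0.le _)
        exact inv_anti₀ h2 h1
      exact mul_le_mul_of_nonneg_right hτlow htpos.le
  · -- upper bound
    set σ : ℝ := B₂ * lam ^ (conjExp p - 1) with hσdef
    have hσ1 : 1 ≤ σ := by
      have h1 : (1:ℝ) ≤ lam ^ (conjExp p - 1) := Real.one_le_rpow hlam (by linarith)
      nlinarith
    have hσ0 : 0 < σ := lt_of_lt_of_le one_pos hσ1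
    have hσp : σ ^ (p - 1) = C₁ * lam := by
      rw [hσdef, Real.mul_rpow hB₂0.le (Real.rpow_nonneg hlam0.le _), hB₂def,
        ← Real.rpow_mul hC₁0.le, ← Real.rpow_mul hlam0.le,
        conjExp_sub_one_mul hp, Real.rpow_one, Real.rpow_one]
    have hlow := (phi'_bounds hφ hT hp hpq σ t hσ1 htpos).1
    rw [hft, hσp] at hlow
    have hlowval : lam * u ≤ φ' (σ * t) := by
      have he : (2 ^ q * K₁ ^ 2)⁻¹ * (C₁ * lam) * u = lam * u := by
        rw [← hC₁def]
        field_simp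
      calc lam * u = (2 ^ q * K₁ ^ 2)⁻¹ * (C₁ * lam) * u := he.symm
        _ ≤ φ' (σ * t) := hlow
    have hle : rcInv φ' (lam * u) ≤ σ * t := by
      refine ((phi'_strictMono hφ).le_iff_le
        (mem_Ici.mpr hl0) (mem_Ici.mpr (by positivity))).mp ?_
      rw [hfl]
      exact hlowval
    calc rcInv φ' (lam * u) ≤ σ * t := hle
      _ = B₂ * lam ^ (conjExp p - 1) * t := by rw [hσdef]

end RcInv

lemma min_conjExp {q : ℝ} (hq : 1 < q) : min (conjExp q) 2 = conjExp (max q 2) := by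
  rcases le_total q 2 with h | h
  · rw [max_eq_right h, conjExp_two]
    refine min_eq_right ?_
    have := conjExp_anti hq h
    rw [conjExp_two] at this
    exact this
  · rw [max_eq_left h]
    refine min_eq_left ?_
    have := conjExp_anti one_lt_two h
    rw [conjExp_two] at this
    exact this

lemma max_conjExp {p : ℝ} (hp : 1 < p) : max (conjExp p) 2 = conjExp (min p 2) := by
  rcases le_total p 2 with h | h
  · rw [min_eq_left h]
    refine max_eq_left ?_
    have := conjExp_anti hp h
    rw [conjExp_two] at this
    exact this
  · rw [min_eq_right h, conjExp_two]
    refine max_eq_right ?_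
    have := conjExp_anti one_lt_two h
    rw [conjExp_two] at this
    exact this

end Lemma23Aux


/-- **Lemma 2.3.** If `φ` is of type `T(p, q, K₁)` then there is `K`, depending only on
`K₁, p, q`, such that `φ_{|P|}` is of type `T(p̄, q̄, K)` and both `(φ_{|P|})*` and
`(φ*)_{|A(P)|}` are of type `T(q̄', p̄', K)`. -/
theorem shifted_type_T (p q K₁ : ℝ) (hp : 1 < p) (hpq : p ≤ q) :
    ∃ K : ℝ, 0 < K ∧
      ∀ (φ φ' φ'' : ℝ → ℝ) (c₀ c₁ cm cA CA : ℝ) (A : Mat 2 2 → Mat 2 2) (P : Mat 2 2),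
        AssumptionPhi φ φ' φ'' c₀ c₁ cm → TypeT φ p q K₁ →
        AssumptionA φ'' A cA CA →
        TypeT (shiftFn φ' (frobNorm P)) (pbar p) (qbar q) K ∧
        TypeT (conjFn (shiftFn φ' (frobNorm P))) (conjExp (qbar q)) (conjExp (pbar p)) K ∧
        TypeT (shiftFn (rcInv φ') (frobNorm (A P))) (conjExp (qbar q)) (conjExp (pbar p)) K := by
  have hq : 1 < q := lt_of_lt_of_le hp hpq
  set KK : ℝ := max K₁ 1 with hKK
  set C₁ : ℝ := 2 ^ q * KK ^ 2 with hC₁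
  set B₂ : ℝ := C₁ ^ (conjExp p - 1) with hB₂
  set K : ℝ := max C₁ (max (C₁ ^ (conjExp (pbar p) - 1)) B₂) with hKdef
  have hKK1 : (1:ℝ) ≤ KK := le_max_right _ _
  have hKK0 : (0:ℝ) < KK := lt_of_lt_of_le one_pos hKK1
  have h2q : (1:ℝ) ≤ 2 ^ q := Real.one_le_rpow one_le_two (by linarith)
  have hC₁1 : 1 ≤ C₁ := by rw [hC₁]; nlinarith
  have hC₁0 : (0:ℝ) < C₁ := lt_of_lt_of_le one_pos hC₁1
  have hK0 : 0 < K :=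
    lt_of_lt_of_le one_pos (le_trans hC₁1 (le_max_left _ _))
  refine ⟨K, hK0, ?_⟩
  intro φ φ' φ'' c₀ c₁ cm cA CA A P hφ hT hA
  have hK₁1 : 1 ≤ K₁ := K₁_ge_one hφ hT
  have hKKeq : KK = K₁ := max_eq_left hK₁1
  have hC₁eq : C₁ = 2 ^ q * K₁ ^ 2 := by rw [hC₁, hKKeq]
  have hpmin : (1:ℝ) < min p 2 := lt_min hp one_lt_two
  have hminmax : min p 2 ≤ max q 2 :=
    le_trans (min_le_left _ _) (le_trans hpq (le_max_left _ _))
  -- bounds on φ'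
  have hgb : ∀ lam t : ℝ, 1 ≤ lam → 0 < t →
      C₁⁻¹ * lam ^ (p - 1) * φ' t ≤ φ' (lam * t) ∧
      φ' (lam * t) ≤ C₁ * lam ^ (q - 1) * φ' t := by
    simp only [hC₁eq]
    exact phi'_bounds hφ hT hp hpq
  have hmono' : MonotoneOn φ' (Ici 0) := hφ.nfun.mono
  have hz : φ' 0 = 0 := hφ.nfun.derivZero
  have ha₀ : 0 ≤ frobNorm P := Real.sqrt_nonneg _
  have hbdds1 : Bdds (shiftFn φ' (frobNorm P)) (min p 2) (max q 2) C₁ :=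
    shift_bdds hp hpq hC₁1 hmono' hz hgb ha₀
  have hψnn : ∀ t : ℝ, 0 ≤ t → 0 ≤ shiftFn φ' (frobNorm P) t :=
    fun t ht => shiftFn_nonneg hmono' hz ha₀ ht
  have hψ0 : shiftFn φ' (frobNorm P) 0 = 0 := shiftFn_zero
  have hψ1 : 0 < shiftFn φ' (frobNorm P) 1 :=
    shiftFn_one_pos hmono' hz ha₀ (fun x hx => hφ.nfun.derivPos x hx)
  -- part 1
  have h1 : TypeT (shiftFn φ' (frobNorm P)) (pbar p) (qbar q) C₁ := by
    have := typeT_of_bdds (by linarith : (0:ℝ) < min p 2) hminmax hC₁1 hψ0 hψnn hbdds1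
    simpa [pbar, qbar] using this
  -- part 2
  have h2 : TypeT (conjFn (shiftFn φ' (frobNorm P))) (conjExp (qbar q)) (conjExp (pbar p))
      (C₁ ^ (conjExp (min p 2) - 1)) := by
    have := conj_typeT hpmin hminmax hC₁1 hψ0 hψnn hψ1 hbdds1
    simpa [pbar, qbar] using this
  -- part 3
  have hq'1 : 1 < conjExp q := one_lt_conjExp hq
  have hq'p' : conjExp q ≤ conjExp p := conjExp_anti hp hpq
  have hB₂1 : 1 ≤ B₂ := Real.one_le_rpow hC₁1 (by have := one_lt_conjExp hp; linarith)
  have hgb3 : ∀ lam u : ℝ, 1 ≤ lam → 0 < u →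
      B₂⁻¹ * lam ^ (conjExp q - 1) * rcInv φ' u ≤ rcInv φ' (lam * u) ∧
      rcInv φ' (lam * u) ≤ B₂ * lam ^ (conjExp p - 1) * rcInv φ' u := by
    simp only [hB₂, hC₁eq]
    exact rcInv_bounds hφ hT hp hpq
  have ha₀3 : 0 ≤ frobNorm (A P) := Real.sqrt_nonneg _
  have hmono3 : MonotoneOn (rcInv φ') (Ici 0) := rcInv_monoOn hφ hT hp hpq
  have hz3 : rcInv φ' 0 = 0 := rcInv_zero hφ hT hp hpq
  have hbdds3 : Bdds (shiftFn (rcInv φ') (frobNorm (A P)))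
      (min (conjExp q) 2) (max (conjExp p) 2) B₂ :=
    shift_bdds hq'1 hq'p' hB₂1 hmono3 hz3 hgb3 ha₀3
  have hψnn3 : ∀ t : ℝ, 0 ≤ t → 0 ≤ shiftFn (rcInv φ') (frobNorm (A P)) t :=
    fun t ht => shiftFn_nonneg hmono3 hz3 ha₀3 ht
  have h3 : TypeT (shiftFn (rcInv φ') (frobNorm (A P)))
      (conjExp (qbar q)) (conjExp (pbar p)) B₂ := by
    have hm : (1:ℝ) < min (conjExp q) 2 := lt_min hq'1 one_lt_two
    have := typeT_of_bdds (by linarith : (0:ℝ) < min (conjExp q) 2)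
      (le_trans (min_le_right _ _) (le_max_right _ _)) hB₂1 shiftFn_zero hψnn3 hbdds3
    rw [min_conjExp hq, max_conjExp hp] at this
    simpa [pbar, qbar] using this
  -- assemble with the common constant K
  refine ⟨typeT_mono h1 hψnn (le_max_left _ _), ?_, ?_⟩
  · refine typeT_mono h2 ?_ ?_
    · intro t ht
      exact conj_nonneg hpmin hminmax hC₁1 hψ0 hψnn hψ1 hbdds1 ht
    · have : C₁ ^ (conjExp (min p 2) - 1) = C₁ ^ (conjExp (pbar p) - 1) := by
        simp [pbar]
      rw [this]
      exact le_trans (le_max_left _ _) (le_max_right _ _)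
  · exact typeT_mono h3 hψnn3 (le_trans (le_max_right _ _) (le_max_right _ _))

end
end

section
/- Let φ satisfy Assumption (φ) and be of type T(p, q, K₁) with 1 < p ≤ q < ∞. Then there is K > 0, depending only on K₁, p and q, such that for all δ ∈ (0, 1] and all t, s ≥ 0 the following Young-type inequalities hold: t·s ≤ K^{q̄} δ^{1−q̄} φ(t) + δ φ*(s), and t·s ≤ δ φ(t) + K^{p̄'−1} δ^{1−p̄'} φ*(s). -/
open MeasureTheory Metric Set Filter
open scoped ENNReal RealInnerProductSpace Topology

noncomputable section

/-- **Young's inequalities (2.9).** If `φ` satisfies Assumption (φ) and is of type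
`T(p, q, K₁)`, there is `K > 0` depending only on `K₁, p, q` such that for all
`δ ∈ (0,1]` and `t, s ≥ 0`:
`t s ≤ K^{q̄} δ^{1−q̄} φ(t) + δ φ*(s)` and
`t s ≤ δ φ(t) + K^{p̄'−1} δ^{1−p̄'} φ*(s)`. -/
theorem young_type_inequalities (p q K₁ : ℝ) (hp : 1 < p) (hpq : p ≤ q) :
    ∃ K : ℝ, 0 < K ∧
      ∀ (φ φ' φ'' : ℝ → ℝ) (c₀ c₁ cm : ℝ),
        AssumptionPhi φ φ' φ'' c₀ c₁ cm → TypeT φ p q K₁ →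
        ∀ δ t s : ℝ, 0 < δ → δ ≤ 1 → 0 ≤ t → 0 ≤ s →
          t * s ≤ K ^ qbar q * δ ^ (1 - qbar q) * φ t + δ * conjFn φ s ∧
          t * s ≤ δ * φ t
            + K ^ (conjExp (pbar p) - 1) * δ ^ (1 - conjExp (pbar p)) * conjFn φ s := by
  refine ⟨max K₁ 1, lt_of_lt_of_le one_pos (le_max_right _ _), ?_⟩
  set K := max K₁ 1 with hKdef
  have hK1 : (1:ℝ) ≤ K := le_max_right _ _
  have hKK₁ : K₁ ≤ K := le_max_left _ _
  have hKpos : (0:ℝ) < K := lt_of_lt_of_le one_pos hK1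
  intro φ φ' φ'' c₀ c₁ cm hφ hT δ t s hδ hδ1 ht hs
  obtain ⟨hzero, hconv, hder, _, hmono', hd0, hdpos⟩ := hφ.nfun
  have hcont : ContinuousOn φ (Ici 0) := fun x hx => (hder x hx).continuousWithinAt
  have hsm : StrictMonoOn φ (Ici 0) := by
    apply strictMonoOn_of_deriv_pos (convex_Ici 0) hcont
    intro x hx
    rw [interior_Ici] at hx
    rw [((hder x (Set.mem_Ici.mpr (le_of_lt hx))).hasDerivAt (Ici_mem_nhds hx)).deriv]
    exact hdpos x hx
  have hφnn : ∀ r : ℝ, 0 ≤ r → 0 ≤ φ r := by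
    intro r hr
    rcases eq_or_lt_of_le hr with h | h
    · rw [← h, hzero]
    · rw [← hzero]
      exact le_of_lt (hsm Set.self_mem_Ici (Set.mem_Ici.mpr (le_of_lt h)) h)
  have hφ1 : 0 < φ 1 := by
    rw [← hzero]
    exact hsm Set.self_mem_Ici (Set.mem_Ici.mpr zero_le_one) one_pos
  have hK₁1 : 1 ≤ K₁ := by
    have h := hT 1 1 zero_le_one zero_le_one
    simp [Real.one_rpow] at h
    nlinarith
  have hK₁pos : 0 < K₁ := lt_of_lt_of_le one_pos hK₁1
  set c : ℝ := φ 1 / K₁ with hcdef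
  have hc : 0 < c := div_pos hφ1 hK₁pos
  have hlow : ∀ r : ℝ, 1 ≤ r → c * r ^ p ≤ φ r := by
    intro r hr
    have hrpos : (0:ℝ) < r := lt_of_lt_of_le one_pos hr
    have hinv1 : r⁻¹ ≤ 1 := inv_le_one_of_one_le₀ hr
    have hinvpos : 0 < r⁻¹ := inv_pos.mpr hrpos
    have h1 := hT r⁻¹ r (le_of_lt hinvpos) (le_of_lt hrpos)
    rw [inv_mul_cancel₀ (ne_of_gt hrpos)] at h1
    rw [max_eq_left (Real.rpow_le_rpow_of_exponent_ge hinvpos hinv1 hpq),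
      Real.inv_rpow (le_of_lt hrpos)] at h1
    have hrp : 0 < r ^ p := Real.rpow_pos_of_pos hrpos p
    have h2 := mul_le_mul_of_nonneg_right h1 (le_of_lt hrp)
    have h3 : K₁ * (r ^ p)⁻¹ * φ r * r ^ p = K₁ * φ r := by
      field_simp
    rw [h3] at h2
    rw [hcdef, div_mul_eq_mul_div, div_le_iff₀ hK₁pos]
    nlinarith
  have hbdd : ∀ u : ℝ, 0 ≤ u → ∀ r ∈ Ici (0:ℝ),
      u * r - φ r ≤ u * max 1 ((u / c + 1) ^ (p - 1)⁻¹) := by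
    intro u hu r hr
    set T := max 1 ((u / c + 1) ^ (p - 1)⁻¹) with hTdef
    have hT1 : (1:ℝ) ≤ T := le_max_left _ _
    rcases le_or_gt r T with h | h
    · have h0 := hφnn r hr
      nlinarith [mul_le_mul_of_nonneg_left h hu]
    · have hr1 : (1:ℝ) ≤ r := le_trans hT1 (le_of_lt h)
      have hrpos : (0:ℝ) < r := lt_of_lt_of_le one_pos hr1
      have hlb := hlow r hr1
      have hsplit : r ^ p = r ^ (p - 1) * r := by
        have he : p = (p - 1) + 1 := by ring
        rw [he, Real.rpow_add hrpos, Real.rpow_one]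
        ring_nf
      have hbase : u / c + 1 ≤ r ^ (p - 1) := by
        have h2 : (u / c + 1) ^ (p - 1)⁻¹ ≤ r := le_trans (le_max_right _ _) (le_of_lt h)
        have hpos : (0:ℝ) ≤ u / c + 1 := by positivity
        have h3 : ((u / c + 1) ^ (p - 1)⁻¹) ^ (p - 1) ≤ r ^ (p - 1) :=
          Real.rpow_le_rpow (Real.rpow_nonneg hpos _) h2 (by linarith)
        rwa [← Real.rpow_mul hpos, inv_mul_cancel₀ (by linarith : p - 1 ≠ 0),
          Real.rpow_one] at h3
      have hcu : c * (u / c + 1) = u + c := by field_simp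
      have h4 : (u + c) * r ≤ c * r ^ (p - 1) * r := by
        rw [← hcu]
        exact mul_le_mul_of_nonneg_right
          (mul_le_mul_of_nonneg_left hbase (le_of_lt hc)) (le_of_lt hrpos)
      have h5 : u * r ≤ φ r := by
        rw [hsplit] at hlb
        nlinarith
      nlinarith [mul_nonneg hu (le_trans zero_le_one hT1)]
  have hbddA : ∀ u : ℝ, 0 ≤ u → BddAbove ((fun r => u * r - φ r) '' Ici 0) := by
    intro u hu
    refine ⟨u * max 1 ((u / c + 1) ^ (p - 1)⁻¹), ?_⟩
    rintro y ⟨r, hr, rfl⟩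
    exact hbdd u hu r hr
  have hne : ∀ u : ℝ, ((fun r => u * r - φ r) '' Ici 0).Nonempty :=
    fun u => ⟨u * 0 - φ 0, ⟨0, Set.self_mem_Ici, rfl⟩⟩
  have hconj_ge : ∀ u r : ℝ, 0 ≤ u → 0 ≤ r → u * r - φ r ≤ conjFn φ u := by
    intro u r hu hr
    exact le_csSup (hbddA u hu) ⟨r, hr, rfl⟩
  have hconj_nn : ∀ u : ℝ, 0 ≤ u → 0 ≤ conjFn φ u := by
    intro u hu
    have h := hconj_ge u 0 hu le_rfl
    simpa [hzero] using h
  have hδinv1 : (1:ℝ) ≤ δ⁻¹ := by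
    have h := mul_inv_cancel₀ (ne_of_gt hδ)
    nlinarith [inv_pos.mpr hδ]
  have hδinvpos : (0:ℝ) < δ⁻¹ := inv_pos.mpr hδ
  constructor
  · -- first inequality
    set Q := qbar q with hQdef
    have hqQ : q ≤ Q := le_max_left _ _
    have hQ2 : (2:ℝ) ≤ Q := le_max_right _ _
    have hQ1 : (1:ℝ) ≤ Q := by linarith
    have h1 : s * (δ⁻¹ * t) - φ (δ⁻¹ * t) ≤ conjFn φ s :=
      hconj_ge s _ hs (mul_nonneg (le_of_lt hδinvpos) ht)
    have h2 : φ (δ⁻¹ * t) ≤ K₁ * δ⁻¹ ^ q * φ t := by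
      have h := hT δ⁻¹ t (le_of_lt hδinvpos) ht
      rwa [max_eq_right (Real.rpow_le_rpow_of_exponent_le hδinv1 hpq)] at h
    have h3 : K₁ * δ⁻¹ ^ q ≤ K ^ Q * δ⁻¹ ^ Q := by
      have ha : K₁ ≤ K ^ Q := by
        calc K₁ ≤ K := hKK₁
          _ = K ^ (1:ℝ) := (Real.rpow_one K).symm
          _ ≤ K ^ Q := Real.rpow_le_rpow_of_exponent_le hK1 hQ1
      have hb : δ⁻¹ ^ q ≤ δ⁻¹ ^ Q := Real.rpow_le_rpow_of_exponent_le hδinv1 hqQ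
      exact mul_le_mul ha hb (by positivity) (by positivity)
    have hδQ : δ ^ (1 - Q) = δ * δ⁻¹ ^ Q := by
      rw [Real.inv_rpow (le_of_lt hδ), ← Real.rpow_neg (le_of_lt hδ), sub_eq_add_neg,
        Real.rpow_add hδ, Real.rpow_one]
    have e1 : δ * (s * (δ⁻¹ * t)) = t * s := by
      have hcan : δ * δ⁻¹ = 1 := mul_inv_cancel₀ (ne_of_gt hδ)
      calc δ * (s * (δ⁻¹ * t)) = δ * δ⁻¹ * (s * t) := by ring
        _ = t * s := by rw [hcan]; ring
    have h4 := mul_le_mul_of_nonneg_left h1 (le_of_lt hδ)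
    rw [mul_sub, e1] at h4
    have h5 : δ * φ (δ⁻¹ * t) ≤ K ^ Q * δ ^ (1 - Q) * φ t := by
      have h6 : φ (δ⁻¹ * t) ≤ K ^ Q * δ⁻¹ ^ Q * φ t :=
        le_trans h2 (mul_le_mul_of_nonneg_right h3 (hφnn t ht))
      calc δ * φ (δ⁻¹ * t) ≤ δ * (K ^ Q * δ⁻¹ ^ Q * φ t) :=
            mul_le_mul_of_nonneg_left h6 (le_of_lt hδ)
        _ = K ^ Q * (δ * δ⁻¹ ^ Q) * φ t := by ring
        _ = K ^ Q * δ ^ (1 - Q) * φ t := by rw [← hδQ]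
    linarith
  · -- second inequality
    set P := pbar p with hPdef
    have hP1 : 1 < P := lt_min hp one_lt_two
    have hPp : P ≤ p := min_le_left _ _
    have hPne : P - 1 ≠ 0 := by
      intro h; exact absurd (by linarith : P = 1) (ne_of_gt hP1)
    have hE : conjExp P - 1 = (P - 1)⁻¹ := by
      rw [conjExp]
      field_simp
      ring
    set μ := δ⁻¹ with hμdef
    have hμ1 : (1:ℝ) ≤ μ := hδinv1
    have hμpos : (0:ℝ) < μ := hδinvpos
    have hK₁μ : (1:ℝ) ≤ K₁ * μ := by nlinarith
    have hK₁μpos : (0:ℝ) < K₁ * μ := mul_pos hK₁pos hμpos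
    set lam := (K₁ * μ) ^ (P - 1)⁻¹ with hlamdef
    have hlam1 : (1:ℝ) ≤ lam := by
      calc (1:ℝ) = 1 ^ (P - 1)⁻¹ := (Real.one_rpow _).symm
        _ ≤ (K₁ * μ) ^ (P - 1)⁻¹ :=
            Real.rpow_le_rpow zero_le_one hK₁μ (inv_nonneg.mpr (by linarith))
    have hlampos : (0:ℝ) < lam := lt_of_lt_of_le one_pos hlam1
    have hlamP1 : lam ^ (P - 1) = K₁ * μ := by
      rw [hlamdef, ← Real.rpow_mul (le_of_lt hK₁μpos),
        inv_mul_cancel₀ hPne, Real.rpow_one]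
    have hlamP : lam ^ P = K₁ * μ * lam := by
      have he : P = (P - 1) + 1 := by ring
      rw [he, Real.rpow_add hlampos, Real.rpow_one, hlamP1]
    have hkey : conjFn φ (μ * s) ≤ lam * μ * conjFn φ s := by
      rw [conjFn]
      apply csSup_le (hne _)
      rintro y ⟨r, hr, rfl⟩
      simp only
      have hlinvpos : 0 < lam⁻¹ := inv_pos.mpr hlampos
      have hw : (0:ℝ) ≤ lam⁻¹ * r := mul_nonneg (le_of_lt hlinvpos) (Set.mem_Ici.mp hr)
      have hl1 : lam⁻¹ ≤ 1 := inv_le_one_of_one_le₀ hlam1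
      have h1 := hT lam⁻¹ r (le_of_lt hlinvpos) hr
      rw [max_eq_left (Real.rpow_le_rpow_of_exponent_ge hlinvpos hl1 hpq)] at h1
      have hl2 : lam⁻¹ ^ p ≤ lam⁻¹ ^ P :=
        Real.rpow_le_rpow_of_exponent_ge hlinvpos hl1 hPp
      have hlP : lam⁻¹ ^ P = (K₁ * μ * lam)⁻¹ := by
        rw [Real.inv_rpow (le_of_lt hlampos), hlamP]
      have h2 : φ (lam⁻¹ * r) ≤ (μ * lam)⁻¹ * φ r := by
        calc φ (lam⁻¹ * r) ≤ K₁ * lam⁻¹ ^ p * φ r := h1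
          _ ≤ K₁ * lam⁻¹ ^ P * φ r :=
              mul_le_mul_of_nonneg_right
                (mul_le_mul_of_nonneg_left hl2 (le_of_lt hK₁pos)) (hφnn r hr)
          _ = (μ * lam)⁻¹ * φ r := by
              rw [hlP, show K₁ * μ * lam = K₁ * (μ * lam) by ring, mul_inv,
                ← mul_assoc, mul_inv_cancel₀ (ne_of_gt hK₁pos), one_mul]
      have hlb : lam * μ * φ (lam⁻¹ * r) ≤ φ r := by
        calc lam * μ * φ (lam⁻¹ * r) ≤ lam * μ * ((μ * lam)⁻¹ * φ r) :=
              mul_le_mul_of_nonneg_left h2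
                (mul_nonneg (le_of_lt hlampos) (le_of_lt hμpos))
          _ = (μ * lam) * (μ * lam)⁻¹ * φ r := by ring
          _ = φ r := by
              rw [mul_inv_cancel₀ (ne_of_gt (mul_pos hμpos hlampos)), one_mul]
      have hmem : s * (lam⁻¹ * r) - φ (lam⁻¹ * r) ≤ conjFn φ s := hconj_ge s _ hs hw
      have e2 : μ * s * r = lam * μ * (s * (lam⁻¹ * r)) := by
        have hcan : lam * lam⁻¹ = 1 := mul_inv_cancel₀ (ne_of_gt hlampos)
        calc μ * s * r = lam * lam⁻¹ * (μ * s * r) := by rw [hcan]; ring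
          _ = lam * μ * (s * (lam⁻¹ * r)) := by ring
      have h3 := mul_le_mul_of_nonneg_left hmem
        (mul_nonneg (le_of_lt hlampos) (le_of_lt hμpos) : (0:ℝ) ≤ lam * μ)
      rw [mul_sub] at h3
      linarith
    have hstart : μ * s * t - φ t ≤ conjFn φ (μ * s) :=
      hconj_ge (μ * s) t (mul_nonneg (le_of_lt hμpos) hs) ht
    have h4 := mul_le_mul_of_nonneg_left (le_trans hstart hkey) (le_of_lt hδ)
    rw [mul_sub] at h4
    have hδμ : δ * μ = 1 := by
      rw [hμdef]; exact mul_inv_cancel₀ (ne_of_gt hδ)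
    have e3 : δ * (μ * s * t) = t * s := by
      calc δ * (μ * s * t) = δ * μ * (s * t) := by ring
        _ = t * s := by rw [hδμ]; ring
    have e4 : δ * (lam * μ * conjFn φ s) = lam * conjFn φ s := by
      calc δ * (lam * μ * conjFn φ s) = lam * (δ * μ) * conjFn φ s := by ring
        _ = lam * conjFn φ s := by rw [hδμ]; ring
    rw [e3, e4] at h4
    have e5 : δ ^ (1 - conjExp P) = μ ^ (P - 1)⁻¹ := by
      have he : 1 - conjExp P = -(P - 1)⁻¹ := by
        have := hE; linarith
      rw [he, Real.rpow_neg (le_of_lt hδ), hμdef,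
        Real.inv_rpow (le_of_lt hδ)]
    have hfin : lam ≤ K ^ (conjExp P - 1) * δ ^ (1 - conjExp P) := by
      rw [hE, e5, hlamdef, Real.mul_rpow (le_of_lt hK₁pos) (le_of_lt hμpos)]
      exact mul_le_mul_of_nonneg_right
        (Real.rpow_le_rpow (le_of_lt hK₁pos) hKK₁ (inv_nonneg.mpr (by linarith)))
        (Real.rpow_nonneg (le_of_lt hμpos) _)
    have hconjs := hconj_nn s hs
    have hlast := mul_le_mul_of_nonneg_right hfin hconjs
    linarith

end
end

section
/- Let φ satisfy Assumption (φ), and define A : ℝ^{2×2} → ℝ^{2×2} by A(Q) := φ'(|Q|) Q/|Q| for Q ≠ 0 and A(0) := 0. Then A satisfies Assumption (A); in particular A is continuous on ℝ^{2×2}, locally Lipschitz on ℝ^{2×2}∖{0}, A(D) is symmetric for symmetric D, and there exist constants c, C > 0, depending only on the characteristics of φ, such that for all symmetric 2×2 matrices P ≠ 0 and Q: (A(P) − A(Q))·(P − Q) ≥ c φ''(|P| + |Q|) |P − Q|² and |A(P) − A(Q)| ≤ C φ''(|P| + |Q|) |P − Q|. -/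
open MeasureTheory Metric Set Filter
open scoped ENNReal RealInnerProductSpace Topology

noncomputable section

section AuxLemmas


lemma frobInner_expand (P Q : Mat 2 2) :
    frobInner P Q = P 0 0 * Q 0 0 + P 0 1 * Q 0 1 + P 1 0 * Q 1 0 + P 1 1 * Q 1 1 := by
  simp [frobInner, Fin.sum_univ_two]; ring

lemma frobInner_self_nonneg (P : Mat 2 2) : 0 ≤ frobInner P P := by
  rw [frobInner_expand]
  nlinarith [mul_self_nonneg (P 0 0), mul_self_nonneg (P 0 1), mul_self_nonneg (P 1 0), mul_self_nonneg (P 1 1)]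

lemma frobNorm_nonneg (P : Mat 2 2) : 0 ≤ frobNorm P := Real.sqrt_nonneg _

lemma frobNorm_sq (P : Mat 2 2) : frobNorm P ^ 2 = frobInner P P :=
  Real.sq_sqrt (frobInner_self_nonneg P)

lemma frobInner_self_eq_zero {P : Mat 2 2} (h : frobInner P P = 0) : P = 0 := by
  rw [frobInner_expand] at h
  ext i j
  fin_cases i <;> fin_cases j <;> simp <;>
    nlinarith [mul_self_nonneg (P 0 0), mul_self_nonneg (P 0 1), mul_self_nonneg (P 1 0),
      mul_self_nonneg (P 1 1)]

lemma frobNorm_zero : frobNorm (0 : Mat 2 2) = 0 := by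
  simp [frobNorm, frobInner_expand]

lemma frobNorm_pos {P : Mat 2 2} (h : P ≠ 0) : 0 < frobNorm P := by
  rcases lt_or_eq_of_le (frobInner_self_nonneg P) with h' | h'
  · exact Real.sqrt_pos.mpr h'
  · exact absurd (frobInner_self_eq_zero h'.symm) h

lemma frobInner_sq_le (P Q : Mat 2 2) :
    (frobInner P Q) ^ 2 ≤ (frobNorm P * frobNorm Q) ^ 2 := by
  have h1 := frobNorm_sq P
  have h2 := frobNorm_sq Q
  rw [mul_pow, h1, h2, frobInner_expand, frobInner_expand, frobInner_expand]
  nlinarith [sq_nonneg (P 0 0 * Q 0 1 - P 0 1 * Q 0 0), sq_nonneg (P 0 0 * Q 1 0 - P 1 0 * Q 0 0),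
    sq_nonneg (P 0 0 * Q 1 1 - P 1 1 * Q 0 0), sq_nonneg (P 0 1 * Q 1 0 - P 1 0 * Q 0 1),
    sq_nonneg (P 0 1 * Q 1 1 - P 1 1 * Q 0 1), sq_nonneg (P 1 0 * Q 1 1 - P 1 1 * Q 1 0)]

lemma frobInner_le (P Q : Mat 2 2) : frobInner P Q ≤ frobNorm P * frobNorm Q := by
  have h := frobInner_sq_le P Q
  have hab : 0 ≤ frobNorm P * frobNorm Q := mul_nonneg (frobNorm_nonneg P) (frobNorm_nonneg Q)
  nlinarith [h, hab]

lemma neg_frobInner_le (P Q : Mat 2 2) : -(frobNorm P * frobNorm Q) ≤ frobInner P Q := by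
  have h := frobInner_sq_le P Q
  have hab : 0 ≤ frobNorm P * frobNorm Q := mul_nonneg (frobNorm_nonneg P) (frobNorm_nonneg Q)
  nlinarith [h, hab]

lemma frobInner_smul_sub_sub (u v : ℝ) (P Q : Mat 2 2) :
    frobInner (u • P - v • Q) (P - Q)
      = u * frobInner P P - (u + v) * frobInner P Q + v * frobInner Q Q := by
  simp only [frobInner_expand, Matrix.sub_apply, Matrix.smul_apply, smul_eq_mul]; ring

lemma frobInner_smul_sub_self (u v : ℝ) (P Q : Mat 2 2) :
    frobInner (u • P - v • Q) (u • P - v • Q)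
      = u ^ 2 * frobInner P P - 2 * u * v * frobInner P Q + v ^ 2 * frobInner Q Q := by
  simp only [frobInner_expand, Matrix.sub_apply, Matrix.smul_apply, smul_eq_mul]; ring

lemma frobInner_sub_self (P Q : Mat 2 2) :
    frobInner (P - Q) (P - Q) = frobInner P P - 2 * frobInner P Q + frobInner Q Q := by
  simp only [frobInner_expand, Matrix.sub_apply]; ring

lemma frobInner_add_self (P Q : Mat 2 2) :
    frobInner (P + Q) (P + Q) = frobInner P P + 2 * frobInner P Q + frobInner Q Q := by
  simp only [frobInner_expand, Matrix.add_apply]; ring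

lemma frobNorm_triangle (P Q : Mat 2 2) : frobNorm (P + Q) ≤ frobNorm P + frobNorm Q := by
  have h1 : frobInner (P + Q) (P + Q) ≤ (frobNorm P + frobNorm Q) ^ 2 := by
    rw [frobInner_add_self]
    have := frobInner_le P Q
    have h2 := frobNorm_sq P
    have h3 := frobNorm_sq Q
    nlinarith
  calc frobNorm (P + Q) = Real.sqrt (frobInner (P + Q) (P + Q)) := rfl
    _ ≤ Real.sqrt ((frobNorm P + frobNorm Q) ^ 2) := Real.sqrt_le_sqrt h1
    _ = frobNorm P + frobNorm Q :=
        Real.sqrt_sq (add_nonneg (frobNorm_nonneg P) (frobNorm_nonneg Q))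

lemma frobNorm_sub_comm (P Q : Mat 2 2) : frobNorm (P - Q) = frobNorm (Q - P) := by
  unfold frobNorm
  congr 1
  simp only [frobInner_expand, Matrix.sub_apply]; ring

lemma frobNorm_smul (r : ℝ) (P : Mat 2 2) : frobNorm (r • P) = |r| * frobNorm P := by
  unfold frobNorm
  have : frobInner (r • P) (r • P) = r ^ 2 * frobInner P P := by
    simp only [frobInner_expand, Matrix.smul_apply, smul_eq_mul]; ring
  rw [this, Real.sqrt_mul (sq_nonneg r), Real.sqrt_sq_eq_abs]

lemma abs_entry_le (P : Mat 2 2) (i j : Fin 2) : |P i j| ≤ frobNorm P := by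
  apply Real.abs_le_sqrt
  rw [frobInner_expand]
  fin_cases i <;> fin_cases j <;> simp <;>
    nlinarith [mul_self_nonneg (P 0 0), mul_self_nonneg (P 0 1), mul_self_nonneg (P 1 0),
      mul_self_nonneg (P 1 1)]

lemma continuous_frobNorm : Continuous (frobNorm : Mat 2 2 → ℝ) := by
  apply Real.continuous_sqrt.comp
  unfold frobInner
  fun_prop

variable {φ φ' φ'' : ℝ → ℝ} {c₀ c₁ cm : ℝ}



lemma AssumptionPhi.phipp_pos (hφ : AssumptionPhi φ φ' φ'' c₀ c₁ cm) {t : ℝ} (ht : 0 < t) :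
    0 < φ'' t := by
  have h1 := hφ.nfun.derivPos t ht
  have h2 := hφ.upperBound t ht
  nlinarith [mul_pos hφ.c1_pos ht]

lemma AssumptionPhi.comp_up (hφ : AssumptionPhi φ φ' φ'' c₀ c₁ cm)
    {b a : ℝ} (hb : 0 < b) (hba : b ≤ a) :
    φ' a ≤ (a / b) ^ ((1:ℝ)/c₀) * φ' b := by
  have ha : 0 < a := lt_of_lt_of_le hb hba
  rcases eq_or_lt_of_le hba with h | h
  · subst h; rw [div_self hb.ne', Real.one_rpow, one_mul]
  · have hderiv : ∀ t : ℝ, 0 < t →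
        HasDerivAt (fun t => Real.log (φ' t) - (1/c₀) * Real.log t)
          (φ'' t / φ' t - (1/c₀) * t⁻¹) t := fun t ht =>
      ((hφ.derivTwo t ht).log (ne_of_gt (hφ.nfun.derivPos t ht))).sub
        ((Real.hasDerivAt_log ht.ne').const_mul (1/c₀))
    obtain ⟨ξ, hξ, hξeq⟩ := exists_hasDerivAt_eq_slope
        (fun t => Real.log (φ' t) - (1/c₀) * Real.log t)
        (fun t => φ'' t / φ' t - (1/c₀) * t⁻¹) h
        (fun t ht => (hderiv t (lt_of_lt_of_le hb ht.1)).continuousAt.continuousWithinAt)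
        (fun t ht => hderiv t (lt_trans hb ht.1))
    have hξ0 : 0 < ξ := lt_trans hb hξ.1
    have hpξ : 0 < φ' ξ := hφ.nfun.derivPos ξ hξ0
    have hd : φ'' ξ / φ' ξ - (1/c₀) * ξ⁻¹ ≤ 0 := by
      rw [sub_nonpos, div_le_iff₀ hpξ, show (1/c₀) * ξ⁻¹ * φ' ξ = φ' ξ / (c₀ * ξ) by
        field_simp, le_div_iff₀ (mul_pos hφ.c0_pos hξ0)]
      nlinarith [hφ.lowerBound ξ hξ0]
    rw [hξeq] at hd
    have hab : 0 < a - b := sub_pos.mpr h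
    have hnum := mul_nonpos_of_nonpos_of_nonneg hd hab.le
    rw [div_mul_cancel₀ _ hab.ne'] at hnum
    have hlog : Real.log (φ' a) - (1/c₀) * Real.log a
        ≤ Real.log (φ' b) - (1/c₀) * Real.log b := by linarith
    have hpa : 0 < φ' a := hφ.nfun.derivPos a ha
    have hpb : 0 < φ' b := hφ.nfun.derivPos b hb
    calc φ' a = Real.exp (Real.log (φ' a)) := (Real.exp_log hpa).symm
      _ ≤ Real.exp (Real.log (φ' b) + (1/c₀) * (Real.log a - Real.log b)) := by
          apply Real.exp_le_exp.mpr; linarith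
      _ = (a / b) ^ ((1:ℝ)/c₀) * φ' b := by
          rw [Real.rpow_def_of_pos (div_pos ha hb), Real.log_div ha.ne' hb.ne',
            show Real.log (φ' b) + 1/c₀ * (Real.log a - Real.log b)
              = (Real.log a - Real.log b) * (1/c₀) + Real.log (φ' b) by ring,
            Real.exp_add, Real.exp_log hpb]

lemma AssumptionPhi.comp_dn (hφ : AssumptionPhi φ φ' φ'' c₀ c₁ cm)
    {b a : ℝ} (hb : 0 < b) (hba : b ≤ a) :
    φ' b ≤ (b / a) ^ ((1:ℝ)/c₁) * φ' a := by
  have ha : 0 < a := lt_of_lt_of_le hb hba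
  rcases eq_or_lt_of_le hba with h | h
  · subst h; rw [div_self hb.ne', Real.one_rpow, one_mul]
  · have hderiv : ∀ t : ℝ, 0 < t →
        HasDerivAt (fun t => Real.log (φ' t) - (1/c₁) * Real.log t)
          (φ'' t / φ' t - (1/c₁) * t⁻¹) t := fun t ht =>
      ((hφ.derivTwo t ht).log (ne_of_gt (hφ.nfun.derivPos t ht))).sub
        ((Real.hasDerivAt_log ht.ne').const_mul (1/c₁))
    obtain ⟨ξ, hξ, hξeq⟩ := exists_hasDerivAt_eq_slope
        (fun t => Real.log (φ' t) - (1/c₁) * Real.log t)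
        (fun t => φ'' t / φ' t - (1/c₁) * t⁻¹) h
        (fun t ht => (hderiv t (lt_of_lt_of_le hb ht.1)).continuousAt.continuousWithinAt)
        (fun t ht => hderiv t (lt_trans hb ht.1))
    have hξ0 : 0 < ξ := lt_trans hb hξ.1
    have hpξ : 0 < φ' ξ := hφ.nfun.derivPos ξ hξ0
    have hd : 0 ≤ φ'' ξ / φ' ξ - (1/c₁) * ξ⁻¹ := by
      rw [sub_nonneg, show (1/c₁) * ξ⁻¹ = 1 / (c₁ * ξ) by field_simp,
        div_le_div_iff₀ (mul_pos hφ.c1_pos hξ0) hpξ]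
      nlinarith [hφ.upperBound ξ hξ0]
    rw [hξeq] at hd
    have hab : 0 < a - b := sub_pos.mpr h
    have hnum := mul_nonneg hd hab.le
    rw [div_mul_cancel₀ _ hab.ne'] at hnum
    have hlog : Real.log (φ' b) - (1/c₁) * Real.log b
        ≤ Real.log (φ' a) - (1/c₁) * Real.log a := by linarith
    have hpa : 0 < φ' a := hφ.nfun.derivPos a ha
    have hpb : 0 < φ' b := hφ.nfun.derivPos b hb
    calc φ' b = Real.exp (Real.log (φ' b)) := (Real.exp_log hpb).symm
      _ ≤ Real.exp (Real.log (φ' a) + (1/c₁) * (Real.log b - Real.log a)) := by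
          apply Real.exp_le_exp.mpr; linarith
      _ = (b / a) ^ ((1:ℝ)/c₁) * φ' a := by
          rw [Real.rpow_def_of_pos (div_pos hb ha), Real.log_div hb.ne' ha.ne',
            show Real.log (φ' a) + 1/c₁ * (Real.log b - Real.log a)
              = (Real.log b - Real.log a) * (1/c₁) + Real.log (φ' a) by ring,
            Real.exp_add, Real.exp_log hpa]

lemma tangent_up {l β : ℝ} (hl0 : 0 < l) (hl1 : l ≤ 1) (hβ : 0 < β) :
    l ^ β ≤ 1 - min 1 β * (1 - l) := by
  rcases le_total 1 β with h | h
  · rw [min_eq_left h]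
    have := Real.rpow_le_rpow_of_exponent_ge hl0 hl1 h
    rw [Real.rpow_one] at this
    linarith
  · rw [min_eq_right h]
    have hb' : (1:ℝ) ≤ 1/β := by rw [le_div_iff₀ hβ]; linarith
    have key := one_add_mul_self_le_rpow_one_add
      (s := l ^ β - 1) (by nlinarith [Real.rpow_nonneg hl0.le β]) hb'
    rw [show (1:ℝ) + (l ^ β - 1) = l ^ β by ring, ← Real.rpow_mul hl0.le,
      mul_one_div_cancel hβ.ne', Real.rpow_one] at key
    have h3 := mul_le_mul_of_nonneg_left key hβ.le
    have h2 : β * (1 + 1/β * (l ^ β - 1)) = β + (l ^ β - 1) := by field_simp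
    rw [h2] at h3
    linarith

lemma tangent_dn {l β : ℝ} (hl0 : 0 < l) (hl1 : l ≤ 1) (hβ : 0 < β) :
    1 - max 1 β * (1 - l) ≤ l ^ β := by
  rcases le_total β 1 with h | h
  · rw [max_eq_left h]
    have := Real.rpow_le_rpow_of_exponent_ge hl0 hl1 h
    rw [Real.rpow_one] at this
    linarith
  · rw [max_eq_right h]
    have key := one_add_mul_self_le_rpow_one_add (s := l - 1) (by linarith) h
    rw [show (1:ℝ) + (l - 1) = l by ring] at key
    linarith

lemma AssumptionPhi.mono' (hφ : AssumptionPhi φ φ' φ'' c₀ c₁ cm) {x y : ℝ}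
    (hx : 0 ≤ x) (hxy : x ≤ y) : φ' x ≤ φ' y :=
  hφ.nfun.mono (mem_Ici.2 hx) (mem_Ici.2 (hx.trans hxy)) hxy

lemma AssumptionPhi.doubling (hφ : AssumptionPhi φ φ' φ'' c₀ c₁ cm) {a b : ℝ}
    (ha : 0 < a) (hb : 0 < b) (hba : b ≤ a) :
    φ' (a + b) ≤ 2 ^ ((1:ℝ)/c₀) * φ' a := by
  have hc0 := hφ.c0_pos
  have h := hφ.comp_up ha (le_add_of_nonneg_right hb.le)
  have h2 : ((a + b)/a) ^ ((1:ℝ)/c₀) ≤ 2 ^ ((1:ℝ)/c₀) := by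
    apply Real.rpow_le_rpow (by positivity) _ (by positivity)
    rw [div_le_iff₀ ha]; linarith
  have hpa : 0 ≤ φ' a := (hφ.nfun.derivPos a ha).le
  nlinarith [h, mul_le_mul_of_nonneg_right h2 hpa]

lemma AssumptionPhi.S1sym (hφ : AssumptionPhi φ φ' φ'' c₀ c₁ cm) {a b : ℝ}
    (ha : 0 < a) (hb : 0 < b) :
    c₀ / 2 ^ ((1:ℝ)/c₀) * (φ'' (a + b) * (a + b)) ≤ φ' a + φ' b := by
  have hT : (0:ℝ) < 2 ^ ((1:ℝ)/c₀) := Real.rpow_pos_of_pos two_pos _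
  suffices aux : ∀ x y : ℝ, 0 < x → 0 < y → y ≤ x →
      c₀ / 2 ^ ((1:ℝ)/c₀) * (φ'' (x + y) * (x + y)) ≤ φ' x + φ' y by
    rcases le_total b a with h | h
    · exact aux a b ha hb h
    · have := aux b a hb ha h
      rw [add_comm b a] at this
      linarith
  intro x y hx hy hyx
  have h1 := hφ.lowerBound (x + y) (by positivity)
  have h2 := hφ.doubling hx hy hyx
  have hy' : 0 ≤ φ' y := (hφ.nfun.derivPos y hy).le
  rw [div_mul_eq_mul_div, div_le_iff₀ hT]
  nlinarith [mul_nonneg hT.le hy']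

lemma AssumptionPhi.S3 (hφ : AssumptionPhi φ φ' φ'' c₀ c₁ cm) {a b : ℝ}
    (ha : 0 < a) (hb : 0 < b) :
    φ' a + φ' b ≤ 2 * c₁ * (φ'' (a + b) * (a + b)) := by
  have h1 : φ' a ≤ φ' (a + b) := hφ.mono' ha.le (by linarith)
  have h2 : φ' b ≤ φ' (a + b) := hφ.mono' hb.le (by linarith)
  have h3 := hφ.upperBound (a + b) (by positivity)
  nlinarith

lemma AssumptionPhi.S2 (hφ : AssumptionPhi φ φ' φ'' c₀ c₁ cm) {a b : ℝ}
    (ha : 0 < a) (hb : 0 < b) (hba : b ≤ a) :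
    min 1 (1/c₁) * (c₀ / 2 ^ ((1:ℝ)/c₀)) * (φ'' (a + b) * (a - b) ^ 2)
      ≤ (φ' a - φ' b) * (a - b) := by
  have hc0 := hφ.c0_pos
  have hc1 := hφ.c1_pos
  have hT : (0:ℝ) < 2 ^ ((1:ℝ)/c₀) := Real.rpow_pos_of_pos two_pos _
  have hK0 : (0:ℝ) < min 1 (1/c₁) := lt_min one_pos (by positivity)
  have hg : 0 < φ'' (a + b) := hφ.phipp_pos (by positivity)
  have hp : 0 < φ' a := hφ.nfun.derivPos a ha
  -- hKp : K * (φ' a * (a - b)) ≤ (φ' a - φ' b) * a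
  have hKp : min 1 (1/c₁) * (φ' a * (a - b)) ≤ (φ' a - φ' b) * a := by
    have hcomp := hφ.comp_dn hb hba
    have htan := tangent_up (div_pos hb ha) ((div_le_one ha).mpr hba)
      (one_div_pos.mpr hφ.c1_pos)
    have hq' : φ' b ≤ (1 - min 1 (1/c₁) * (1 - b/a)) * φ' a := by
      calc φ' b ≤ (b/a) ^ ((1:ℝ)/c₁) * φ' a := hcomp
        _ ≤ (1 - min 1 (1/c₁) * (1 - b/a)) * φ' a :=
            mul_le_mul_of_nonneg_right htan hp.le
    have h5 := mul_le_mul_of_nonneg_right hq' ha.le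
    have hab2 : min 1 (1/c₁) * (φ' a) * (a * (b/a)) = min 1 (1/c₁) * (φ' a) * b := by
      rw [mul_div_cancel₀ _ ha.ne']
    nlinarith [h5, hab2]
  -- hM : c₀ * (a * g) ≤ T * φ' a
  have hM : c₀ * (a * φ'' (a + b)) ≤ 2 ^ ((1:ℝ)/c₀) * φ' a := by
    have h1 := hφ.lowerBound (a + b) (by positivity)
    have h2 := hφ.doubling ha hb hba
    nlinarith [mul_pos hφ.c0_pos hb, mul_pos (mul_pos hφ.c0_pos hb) hg]
  rw [show min 1 (1/c₁) * (c₀ / 2 ^ ((1:ℝ)/c₀)) * (φ'' (a + b) * (a - b) ^ 2)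
      = min 1 (1/c₁) * c₀ * (φ'' (a + b) * (a - b) ^ 2) / 2 ^ ((1:ℝ)/c₀) by ring,
    div_le_iff₀ hT]
  have key : min 1 (1/c₁) * c₀ * (φ'' (a + b) * (a - b) ^ 2) * a
      ≤ (φ' a - φ' b) * (a - b) * 2 ^ ((1:ℝ)/c₀) * a := by
    nlinarith [mul_le_mul_of_nonneg_right hM (mul_nonneg hK0.le (sq_nonneg (a - b))),
      mul_le_mul_of_nonneg_right hKp (mul_nonneg hT.le (sub_nonneg.mpr hba))]
  have := le_of_mul_le_mul_right key ha
  linarith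

lemma AssumptionPhi.S4 (hφ : AssumptionPhi φ φ' φ'' c₀ c₁ cm) {a b : ℝ}
    (ha : 0 < a) (hb : 0 < b) (hba : b ≤ a) :
    φ' a - φ' b ≤ max 1 (1/c₀) * (2 * c₁) * (φ'' (a + b) * (a - b)) := by
  have hc0 := hφ.c0_pos
  have hc1 := hφ.c1_pos
  have hM1 : (1:ℝ) ≤ max 1 (1/c₀) := le_max_left _ _
  have hg : 0 < φ'' (a + b) := hφ.phipp_pos (by positivity)
  have hp : 0 < φ' a := hφ.nfun.derivPos a ha
  -- (φ' a - φ' b) * a ≤ M * φ' a * (a - b)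
  have hKp : (φ' a - φ' b) * a ≤ max 1 (1/c₀) * φ' a * (a - b) := by
    have hcompu := hφ.comp_up hb hba
    have hβ : (0:ℝ) < 1/c₀ := one_div_pos.mpr hφ.c0_pos
    have hprod : ((b/a) ^ ((1:ℝ)/c₀)) * ((a/b) ^ ((1:ℝ)/c₀)) = 1 := by
      rw [← Real.mul_rpow (by positivity) (by positivity),
        show b/a * (a/b) = 1 by field_simp, Real.one_rpow]
    have hq : (b/a) ^ ((1:ℝ)/c₀) * φ' a ≤ φ' b := by
      have := mul_le_mul_of_nonneg_left hcompu
        (Real.rpow_nonneg (by positivity : (0:ℝ) ≤ b/a) ((1:ℝ)/c₀))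
      rw [← mul_assoc, hprod, one_mul] at this
      exact this
    have htan := tangent_dn (div_pos hb ha) ((div_le_one ha).mpr hba) hβ
    have hq2 : (1 - max 1 (1/c₀) * (1 - b/a)) * φ' a ≤ φ' b :=
      le_trans (mul_le_mul_of_nonneg_right htan hp.le) hq
    have h5 := mul_le_mul_of_nonneg_right hq2 ha.le
    have hab2 : max 1 (1/c₀) * (φ' a) * (a * (b/a)) = max 1 (1/c₀) * (φ' a) * b := by
      rw [mul_div_cancel₀ _ ha.ne']
    nlinarith [h5, hab2]
  have hMp : φ' a ≤ 2 * c₁ * (a * φ'' (a + b)) := by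
    have h1 : φ' a ≤ φ' (a + b) := hφ.mono' ha.le (by linarith)
    have h2 := hφ.upperBound (a + b) (by positivity)
    nlinarith [mul_pos hφ.c1_pos hg, mul_nonneg (mul_pos hφ.c1_pos hg).le (sub_nonneg.mpr hba)]
  have key : (φ' a - φ' b) * a ≤ max 1 (1/c₀) * (2 * c₁) * (φ'' (a + b) * (a - b)) * a := by
    nlinarith [hKp, mul_le_mul_of_nonneg_right hMp
      (mul_nonneg (by positivity : (0:ℝ) ≤ max 1 (1/c₀)) (sub_nonneg.mpr hba))]
  exact le_of_mul_le_mul_right key ha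

lemma AssumptionPhi.E1 (hφ : AssumptionPhi φ φ' φ'' c₀ c₁ cm) {a b : ℝ}
    (ha : 0 < a) (hb : 0 < b) :
    min 1 (1/c₁) * (c₀ / 2 ^ ((1:ℝ)/c₀)) * (φ'' (a + b) * (a - b) ^ 2)
      ≤ (φ' a - φ' b) * (a - b) := by
  rcases le_total b a with h | h
  · exact hφ.S2 ha hb h
  · have := hφ.S2 hb ha h
    rw [add_comm b a] at this
    nlinarith [this]

lemma AssumptionPhi.E4 (hφ : AssumptionPhi φ φ' φ'' c₀ c₁ cm) {a b : ℝ}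
    (ha : 0 < a) (hb : 0 < b) :
    |φ' a - φ' b| ≤ max 1 (1/c₀) * (2 * c₁) * (φ'' (a + b) * |a - b|) := by
  rcases le_total b a with h | h
  · rw [abs_of_nonneg (sub_nonneg.mpr (hφ.mono' hb.le h)),
      abs_of_nonneg (sub_nonneg.mpr h)]
    exact hφ.S4 ha hb h
  · rw [abs_sub_comm (φ' a) (φ' b), abs_sub_comm a b,
      abs_of_nonneg (sub_nonneg.mpr (hφ.mono' ha.le h)),
      abs_of_nonneg (sub_nonneg.mpr h)]
    have := hφ.S4 hb ha h
    rw [add_comm b a] at this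
    exact this


lemma frobInner_smul_left (u : ℝ) (P Q : Mat 2 2) :
    frobInner (u • P) Q = u * frobInner P Q := by
  simp only [frobInner_expand, Matrix.smul_apply, smul_eq_mul]; ring

lemma frobNorm_le_of_sq {X : Mat 2 2} {y : ℝ} (hy : 0 ≤ y) (h : frobInner X X ≤ y ^ 2) :
    frobNorm X ≤ y := by
  calc frobNorm X = Real.sqrt (frobInner X X) := rfl
    _ ≤ Real.sqrt (y ^ 2) := Real.sqrt_le_sqrt h
    _ = y := Real.sqrt_sq hy

/-- Purely algebraic core of the coercivity estimate: a function linear in `s` on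
`[-ab, ab]` is bounded below by its values at the endpoints. -/
lemma coercive_alg {a b s p q g c : ℝ} (ha : 0 < a) (hb : 0 < b)
    (hs1 : s ≤ a * b) (hs2 : -(a * b) ≤ s)
    (hA : 0 ≤ (p - q) * (a - b) - c * (g * (a - b) ^ 2))
    (hB : 0 ≤ (p + q) * (a + b) - c * (g * (a + b) ^ 2)) :
    c * g * (a ^ 2 - 2 * s + b ^ 2) ≤ p / a * a ^ 2 - (p / a + q / b) * s + q / b * b ^ 2 := by
  refine le_of_mul_le_mul_right ?_ (mul_pos ha hb)
  have hexp : (p / a * a ^ 2 - (p / a + q / b) * s + q / b * b ^ 2) * (a * b)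
      = p * a ^ 2 * b + q * a * b ^ 2 - (p * b + q * a) * s := by
    field_simp; ring
  rw [hexp]
  nlinarith [mul_nonneg (by linarith : (0:ℝ) ≤ a * b + s) hA,
    mul_nonneg (by linarith : (0:ℝ) ≤ a * b - s) hB, mul_pos ha hb]

/-- Purely algebraic core of the growth estimate. -/
lemma growth_alg {a b s p q g C : ℝ} (ha : 0 < a) (hb : 0 < b)
    (hs1 : s ≤ a * b) (hs2 : -(a * b) ≤ s)
    (hC : (p - q) ^ 2 ≤ C ^ 2 * g ^ 2 * (a - b) ^ 2)
    (hD : (p + q) ^ 2 ≤ C ^ 2 * g ^ 2 * (a + b) ^ 2) :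
    (p / a) ^ 2 * a ^ 2 - 2 * (p / a) * (q / b) * s + (q / b) ^ 2 * b ^ 2
      ≤ C ^ 2 * g ^ 2 * (a ^ 2 - 2 * s + b ^ 2) := by
  refine le_of_mul_le_mul_right ?_ (mul_pos ha hb)
  have hexp : ((p / a) ^ 2 * a ^ 2 - 2 * (p / a) * (q / b) * s + (q / b) ^ 2 * b ^ 2) * (a * b)
      = p ^ 2 * a * b + q ^ 2 * a * b - 2 * p * q * s := by
    field_simp; ring
  rw [hexp]
  nlinarith [mul_nonneg (by linarith : (0:ℝ) ≤ a * b + s)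
      (by linarith : 0 ≤ C ^ 2 * g ^ 2 * (a - b) ^ 2 - (p - q) ^ 2),
    mul_nonneg (by linarith : (0:ℝ) ≤ a * b - s)
      (by linarith : 0 ≤ C ^ 2 * g ^ 2 * (a + b) ^ 2 - (p + q) ^ 2),
    mul_pos ha hb]

/-- Coercivity of the model vector field, for arbitrary matrices. -/
lemma model_coercive (hφ : AssumptionPhi φ φ' φ'' c₀ c₁ cm) (P Q : Mat 2 2) (hP : P ≠ 0) :
    min 1 (1/c₁) * (c₀ / 2 ^ ((1:ℝ)/c₀)) * φ'' (frobNorm P + frobNorm Q)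
        * frobNorm (P - Q) ^ 2
      ≤ frobInner ((if P = 0 then 0 else (φ' (frobNorm P) / frobNorm P) • P)
          - (if Q = 0 then 0 else (φ' (frobNorm Q) / frobNorm Q) • Q)) (P - Q) := by
  have hc0 := hφ.c0_pos
  have hc1 := hφ.c1_pos
  have hT : (0:ℝ) < 2 ^ ((1:ℝ)/c₀) := Real.rpow_pos_of_pos two_pos _
  have hT1 : (1:ℝ) ≤ 2 ^ ((1:ℝ)/c₀) := Real.one_le_rpow one_le_two (by positivity)
  have hK1 : min 1 (1/c₁) ≤ 1 := min_le_left _ _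
  have hK0 : (0:ℝ) < min 1 (1/c₁) := lt_min one_pos (by positivity)
  have ha : 0 < frobNorm P := frobNorm_pos hP
  rw [if_neg hP]
  by_cases hQ : Q = 0
  · subst hQ
    rw [if_pos rfl, sub_zero, sub_zero, frobNorm_zero, add_zero, frobInner_smul_left]
    have hPP : frobInner P P = frobNorm P ^ 2 := (frobNorm_sq P).symm
    rw [hPP]
    have hlb := hφ.lowerBound (frobNorm P) ha
    have hg : 0 < φ'' (frobNorm P) := hφ.phipp_pos ha
    have hdiv : φ' (frobNorm P) / frobNorm P * frobNorm P ^ 2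
        = φ' (frobNorm P) * frobNorm P := by
      field_simp
    rw [hdiv]
    have hcAle : min 1 (1/c₁) * (c₀ / 2 ^ ((1:ℝ)/c₀)) ≤ c₀ := by
      have h2 : c₀ / 2 ^ ((1:ℝ)/c₀) ≤ c₀ := by
        rw [div_le_iff₀ hT]; nlinarith
      nlinarith [div_pos hc0 hT]
    nlinarith [mul_nonneg hg.le (sq_nonneg (frobNorm P)), sq_nonneg (frobNorm P),
      mul_pos hg (mul_pos ha ha)]
  · rw [if_neg hQ, frobInner_smul_sub_sub]
    have hb : 0 < frobNorm Q := frobNorm_pos hQ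
    have hPP : frobInner P P = frobNorm P ^ 2 := (frobNorm_sq P).symm
    have hQQ : frobInner Q Q = frobNorm Q ^ 2 := (frobNorm_sq Q).symm
    rw [hPP, hQQ, frobNorm_sq (P - Q), frobInner_sub_self, hPP, hQQ]
    have hg0 : 0 < φ'' (frobNorm P + frobNorm Q) := hφ.phipp_pos (by positivity)
    have hE1 := hφ.E1 (φ := φ) ha hb
    have hE2 : min 1 (1/c₁) * (c₀ / 2 ^ ((1:ℝ)/c₀))
        * (φ'' (frobNorm P + frobNorm Q) * (frobNorm P + frobNorm Q) ^ 2)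
        ≤ (φ' (frobNorm P) + φ' (frobNorm Q)) * (frobNorm P + frobNorm Q) := by
      have h1 := hφ.S1sym (φ := φ) ha hb
      nlinarith [mul_le_mul_of_nonneg_left h1 (by positivity : (0:ℝ) ≤ frobNorm P + frobNorm Q),
        mul_nonneg (mul_nonneg (div_pos hc0 hT).le hg0.le) (sq_nonneg (frobNorm P + frobNorm Q))]
    exact coercive_alg ha hb (frobInner_le P Q) (neg_frobInner_le P Q)
      (sub_nonneg.mpr hE1) (sub_nonneg.mpr hE2)

/-- Growth bound for the model vector field, for arbitrary matrices. -/
lemma model_growth (hφ : AssumptionPhi φ φ' φ'' c₀ c₁ cm) (P Q : Mat 2 2) (hP : P ≠ 0) :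
    frobNorm ((if P = 0 then 0 else (φ' (frobNorm P) / frobNorm P) • P)
        - (if Q = 0 then 0 else (φ' (frobNorm Q) / frobNorm Q) • Q))
      ≤ max 1 (1/c₀) * (2 * c₁) * φ'' (frobNorm P + frobNorm Q) * frobNorm (P - Q) := by
  have hc0 := hφ.c0_pos
  have hc1 := hφ.c1_pos
  have hM1 : (1:ℝ) ≤ max 1 (1/c₀) := le_max_left _ _
  have hM0 : (0:ℝ) < max 1 (1/c₀) := lt_of_lt_of_le one_pos hM1
  have ha : 0 < frobNorm P := frobNorm_pos hP
  rw [if_neg hP]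
  by_cases hQ : Q = 0
  · subst hQ
    rw [if_pos rfl, sub_zero, sub_zero, frobNorm_zero, add_zero, frobNorm_smul]
    have hp0 : 0 < φ' (frobNorm P) := hφ.nfun.derivPos _ ha
    rw [abs_of_nonneg (by positivity)]
    have hub := hφ.upperBound (frobNorm P) ha
    have hg : 0 < φ'' (frobNorm P) := hφ.phipp_pos ha
    have hdiv : φ' (frobNorm P) / frobNorm P * frobNorm P = φ' (frobNorm P) := by
      field_simp
    rw [hdiv]
    nlinarith [mul_pos hg ha]
  · rw [if_neg hQ]
    have hb : 0 < frobNorm Q := frobNorm_pos hQ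
    have hp0 : 0 < φ' (frobNorm P) := hφ.nfun.derivPos _ ha
    have hq0 : 0 < φ' (frobNorm Q) := hφ.nfun.derivPos _ hb
    have hg0 : 0 < φ'' (frobNorm P + frobNorm Q) := hφ.phipp_pos (by positivity)
    have hnd : 0 ≤ frobNorm (P - Q) := frobNorm_nonneg _
    apply frobNorm_le_of_sq (by positivity)
    rw [frobInner_smul_sub_self]
    have hPP : frobInner P P = frobNorm P ^ 2 := (frobNorm_sq P).symm
    have hQQ : frobInner Q Q = frobNorm Q ^ 2 := (frobNorm_sq Q).symm
    rw [hPP, hQQ]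
    have hrhs : (max 1 (1/c₀) * (2 * c₁) * φ'' (frobNorm P + frobNorm Q) * frobNorm (P - Q)) ^ 2
        = (max 1 (1/c₀) * (2 * c₁)) ^ 2 * φ'' (frobNorm P + frobNorm Q) ^ 2
          * (frobNorm P ^ 2 - 2 * frobInner P Q + frobNorm Q ^ 2) := by
      rw [mul_pow, mul_pow, frobNorm_sq (P - Q), frobInner_sub_self, hPP, hQQ]
    rw [hrhs]
    have hE4 := hφ.E4 (φ := φ) ha hb
    have hC : (φ' (frobNorm P) - φ' (frobNorm Q)) ^ 2
        ≤ (max 1 (1/c₀) * (2 * c₁)) ^ 2 * φ'' (frobNorm P + frobNorm Q) ^ 2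
          * (frobNorm P - frobNorm Q) ^ 2 := by
      have h1 := mul_self_le_mul_self (abs_nonneg (φ' (frobNorm P) - φ' (frobNorm Q))) hE4
      rw [← sq_abs (φ' (frobNorm P) - φ' (frobNorm Q)), ← sq_abs (frobNorm P - frobNorm Q)]
      nlinarith [h1]
    have hD : (φ' (frobNorm P) + φ' (frobNorm Q)) ^ 2
        ≤ (max 1 (1/c₀) * (2 * c₁)) ^ 2 * φ'' (frobNorm P + frobNorm Q) ^ 2
          * (frobNorm P + frobNorm Q) ^ 2 := by
      have h1 := hφ.S3 (φ := φ) ha hb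
      have h2 : φ' (frobNorm P) + φ' (frobNorm Q)
          ≤ max 1 (1/c₀) * (2 * c₁) * (φ'' (frobNorm P + frobNorm Q) * (frobNorm P + frobNorm Q)) := by
        nlinarith [mul_nonneg (mul_nonneg (by linarith : (0:ℝ) ≤ 2 * c₁) hg0.le)
          (by positivity : (0:ℝ) ≤ frobNorm P + frobNorm Q)]
      have h3 := mul_self_le_mul_self (by linarith : (0:ℝ) ≤ φ' (frobNorm P) + φ' (frobNorm Q)) h2
      nlinarith [h3]
    exact growth_alg ha hb (frobInner_le P Q) (neg_frobInner_le P Q) hC hD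

end AuxLemmas

/-- **The model vector field satisfies Assumption (A).** If `φ` satisfies Assumption (φ),
then `A(Q) := φ'(|Q|) Q/|Q|` (with `A(0) = 0`) satisfies Assumption (A), with constants
depending only on the characteristics of `φ`. -/
theorem model_vector_field_assumptionA (c₀ c₁ cm : ℝ) :
    ∃ cA CA : ℝ, 0 < cA ∧ 0 < CA ∧
      ∀ φ φ' φ'' : ℝ → ℝ,
        AssumptionPhi φ φ' φ'' c₀ c₁ cm →
        AssumptionA φ''
          (fun Q : Mat 2 2 => if Q = 0 then 0 else (φ' (frobNorm Q) / frobNorm Q) • Q)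
          cA CA := by
  by_cases hex : ∃ pp : (ℝ → ℝ) × (ℝ → ℝ) × (ℝ → ℝ), AssumptionPhi pp.1 pp.2.1 pp.2.2 c₀ c₁ cm
  · obtain ⟨w, hw⟩ := hex
    have hc0 : 0 < c₀ := hw.c0_pos
    have hc1 : 0 < c₁ := hw.c1_pos
    have hT : (0:ℝ) < 2 ^ ((1:ℝ)/c₀) := Real.rpow_pos_of_pos two_pos _
    have hK0 : (0:ℝ) < min 1 (1/c₁) := lt_min one_pos (by positivity)
    have hM0 : (0:ℝ) < max 1 (1/c₀) := lt_of_lt_of_le one_pos (le_max_left _ _)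
    refine ⟨min 1 (1/c₁) * (c₀ / 2 ^ ((1:ℝ)/c₀)), max 1 (1/c₀) * (2 * c₁),
      by positivity, by positivity, ?_⟩
    intro φ φ' φ'' hφ
    refine ⟨?_, ?_, ?_, ?_, by positivity, by positivity, ?_, ?_⟩
    -- continuity
    · have hn : Continuous (frobNorm : Mat 2 2 → ℝ) := continuous_frobNorm
      have hφn : Continuous fun Q : Mat 2 2 => φ' (frobNorm Q) :=
        hφ.contOne.comp_continuous hn fun Q => mem_Ici.2 (frobNorm_nonneg Q)
      rw [continuous_iff_continuousAt]
      intro Q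
      by_cases hQ : Q = 0
      · subst hQ
        suffices h : Filter.Tendsto (fun Q : Mat 2 2 => if Q = 0 then (0 : Mat 2 2)
            else (φ' (frobNorm Q) / frobNorm Q) • Q) (𝓝 0) (𝓝 0) by
          simpa [ContinuousAt] using h
        have hlim : Filter.Tendsto (fun Q : Mat 2 2 => φ' (frobNorm Q)) (𝓝 0) (𝓝 0) := by
          have h0 : φ' (frobNorm (0 : Mat 2 2)) = 0 := by
            rw [frobNorm_zero, hφ.nfun.derivZero]
          simpa [ContinuousAt, h0] using hφn.continuousAt (x := (0 : Mat 2 2))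
        refine tendsto_pi_nhds.mpr fun i => tendsto_pi_nhds.mpr fun j => ?_
        refine squeeze_zero_norm ?_ hlim
        intro R
        by_cases hR : R = 0
        · subst hR
          simp [frobNorm_zero, hφ.nfun.derivZero]
        · rw [if_neg hR]
          have hr : 0 < frobNorm R := frobNorm_pos hR
          have hp : 0 ≤ φ' (frobNorm R) := (hφ.nfun.derivPos _ hr).le
          have habs : |((φ' (frobNorm R) / frobNorm R) • R) i j|
              = φ' (frobNorm R) / frobNorm R * |R i j| := by
            rw [Matrix.smul_apply, smul_eq_mul, abs_mul, abs_of_nonneg (by positivity)]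
          rw [Real.norm_eq_abs, habs]
          calc φ' (frobNorm R) / frobNorm R * |R i j|
              ≤ φ' (frobNorm R) / frobNorm R * frobNorm R :=
                mul_le_mul_of_nonneg_left (abs_entry_le R i j) (by positivity)
            _ = φ' (frobNorm R) := by field_simp
      · have hopen : {R : Mat 2 2 | R ≠ 0} ∈ 𝓝 Q :=
          IsOpen.mem_nhds isOpen_compl_singleton hQ
        have hca : ContinuousAt (fun R : Mat 2 2 => (φ' (frobNorm R) / frobNorm R) • R) Q :=
          ((hφn.continuousAt.div hn.continuousAt (frobNorm_pos hQ).ne')).smul continuousAt_id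
        apply hca.congr
        filter_upwards [hopen] with R hR
        rw [if_neg hR]
    -- local Lipschitz
    · intro P hP
      have hr : 0 < frobNorm P := frobNorm_pos hP
      have hp3 : 0 < φ' (3 * frobNorm P) := hφ.nfun.derivPos _ (by positivity)
      refine ⟨max 1 (1/c₀) * (2 * c₁) * (φ' (3 * frobNorm P) / (c₀ * frobNorm P)),
        frobNorm P / 2, by positivity, ?_⟩
      intro Q₁ Q₂ h₁ h₂
      have hbound : ∀ R : Mat 2 2, frobNorm (R - P) < frobNorm P / 2 →
          frobNorm P / 2 ≤ frobNorm R ∧ frobNorm R ≤ 3 * frobNorm P / 2 := by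
        intro R hR
        have ht1 : frobNorm P ≤ frobNorm R + frobNorm (P - R) := by
          have h := frobNorm_triangle R (P - R)
          rw [show R + (P - R) = P by abel] at h
          exact h
        have ht2 : frobNorm R ≤ frobNorm P + frobNorm (R - P) := by
          have h := frobNorm_triangle P (R - P)
          rw [show P + (R - P) = R by abel] at h
          exact h
        rw [frobNorm_sub_comm P R] at ht1
        constructor <;> linarith
      obtain ⟨hl1, hu1⟩ := hbound Q₁ h₁
      obtain ⟨hl2, hu2⟩ := hbound Q₂ h₂
      have hQ1 : Q₁ ≠ 0 := by
        intro h
        rw [h, frobNorm_zero] at hl1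
        linarith
      have hgr := model_growth hφ Q₁ Q₂ hQ1
      have htpos : 0 < frobNorm Q₁ + frobNorm Q₂ := by linarith
      have hpp : φ'' (frobNorm Q₁ + frobNorm Q₂)
          ≤ φ' (3 * frobNorm P) / (c₀ * frobNorm P) := by
        rw [le_div_iff₀ (by positivity)]
        have hlb := hφ.lowerBound (frobNorm Q₁ + frobNorm Q₂) htpos
        have hmono : φ' (frobNorm Q₁ + frobNorm Q₂) ≤ φ' (3 * frobNorm P) :=
          hφ.mono' htpos.le (by linarith)
        have hg := hφ.phipp_pos htpos
        nlinarith [mul_pos hc0 hg]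
      refine le_trans hgr ?_
      have h := mul_le_mul_of_nonneg_left hpp
        (by positivity : (0:ℝ) ≤ max 1 (1/c₀) * (2 * c₁))
      exact mul_le_mul_of_nonneg_right (by nlinarith [h]) (frobNorm_nonneg _)
    -- zero
    · simp
    -- symm
    · intro D hD
      by_cases hD0 : D = 0
      · simp [hD0, Matrix.IsSymm]
      · rw [if_neg hD0]
        unfold Matrix.IsSymm
        rw [Matrix.transpose_smul, hD]
    -- coercive
    · intro P Q _ _ hP
      exact model_coercive hφ P Q hP
    -- growth
    · intro P Q _ _ hP
      exact model_growth hφ P Q hP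
  · exact ⟨1, 1, one_pos, one_pos, fun φ φ' φ'' hφ => absurd ⟨(φ, φ', φ''), hφ⟩ hex⟩


end
end
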